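/- arXiv:1308.6227 — 5 statements merged into one kernel-verified Lean document; each statement's English description precedes it below -/
import Mathlib

section
/- If f ∈ L²(ℝⁿ) and the Fourier transform of f is supported in [-π,π]ⁿ, then the sequence of samples (f(j))_{j∈ℤⁿ} is square-summable. -/
open MeasureTheory Filter Real
open scoped RealInnerProductSpace

noncomputable section

/-- The embedding of the integer lattice `ℤⁿ` into `ℝⁿ`. -/
def lat (n : ℕ) (j : Fin n → ℤ) : EuclideanSpace ℝ (Fin n) := WithLp.toLp 2 (fun i => (j i : ℝ))

private lemma key1' (m : ℤ) :
    ∫ x in Set.Icc (-π) π, Complex.exp (Complex.I * m * x) =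
      if m = 0 then (2 * π : ℂ) else 0 := by
  rw [MeasureTheory.integral_Icc_eq_integral_Ioc,
    ← intervalIntegral.integral_of_le (by linarith [pi_pos] : -π ≤ π)]
  by_cases hm : m = 0
  · simp [hm]
    ring
  · simp only [hm, if_false]
    have h1 : (fun x : ℝ => Complex.exp (Complex.I * m * x)) =
        fun x : ℝ => Complex.exp ((Complex.I * m) * x) := by
      funext x; ring_nf
    have hc : (Complex.I * (m : ℂ)) ≠ 0 := by
      simp [Complex.I_ne_zero, hm]
    rw [h1, integral_exp_mul_complex hc]
    rw [div_eq_zero_iff]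
    left
    rw [sub_eq_zero]
    rw [Complex.exp_eq_exp_iff_exists_int]
    exact ⟨m, by push_cast; ring⟩

private def Cube' (n : ℕ) : Set (EuclideanSpace ℝ (Fin n)) :=
  (MeasurableEquiv.toLp 2 (Fin n → ℝ)).symm ⁻¹' (Set.pi Set.univ fun _ => Set.Icc (-π) π)

private lemma measurableSet_Cube' (n : ℕ) : MeasurableSet (Cube' n) :=
  (MeasurableEquiv.toLp 2 (Fin n → ℝ)).symm.measurable
    (MeasurableSet.univ_pi fun _ => measurableSet_Icc)

private lemma mem_Cube' {n : ℕ} {ξ : EuclideanSpace ℝ (Fin n)} :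
    ξ ∈ Cube' n ↔ ∀ i, ξ i ∈ Set.Icc (-π) π := by
  simp only [Cube', Set.mem_preimage, Set.mem_univ_pi]
  exact Iff.rfl

private lemma boxInt' (n : ℕ) (m : Fin n → ℤ) :
    ∫ ξ in Cube' n, Complex.exp (Complex.I * ((∑ i, (m i : ℝ) * ξ i : ℝ) : ℂ)) =
      ∏ i, (if m i = 0 then (2 * π : ℂ) else 0) := by
  rw [← integral_indicator (measurableSet_Cube' n)]
  rw [← ((EuclideanSpace.volume_preserving_symm_measurableEquiv_toLp (Fin n)).symm _).integral_comp'
    (f := (MeasurableEquiv.toLp 2 (Fin n → ℝ)).symm.symm)]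
  have hpt : ∀ y : Fin n → ℝ,
      (Cube' n).indicator (fun ξ => Complex.exp (Complex.I * ((∑ i, (m i : ℝ) * ξ i : ℝ) : ℂ)))
        ((MeasurableEquiv.toLp 2 (Fin n → ℝ)).symm.symm y) =
      ∏ i, (Set.Icc (-π) π).indicator (fun x => Complex.exp (Complex.I * (m i) * x)) (y i) := by
    intro y
    have happ : ∀ i, ((MeasurableEquiv.toLp 2 (Fin n → ℝ)).symm.symm y) i = y i := fun _ => rfl
    by_cases h : ∀ i, y i ∈ Set.Icc (-π) π
    · rw [Set.indicator_of_mem (by rw [mem_Cube']; intro i; rw [happ]; exact h i)]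
      rw [Finset.prod_congr rfl (fun i _ => Set.indicator_of_mem (h i) _)]
      rw [← Complex.exp_sum]
      congr 1
      push_cast
      rw [Finset.mul_sum]
      exact Finset.sum_congr rfl fun i _ => by rw [happ]; ring
    · push_neg at h
      obtain ⟨i, hi⟩ := h
      rw [Set.indicator_of_notMem (by rw [mem_Cube']; push_neg; exact ⟨i, by rw [happ]; exact hi⟩)]
      exact (Finset.prod_eq_zero (Finset.mem_univ i)
        (Set.indicator_of_notMem hi _)).symm
  simp_rw [hpt]
  rw [volume_pi]
  rw [MeasureTheory.integral_fintype_prod_eq_prod (ι := Fin n)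
    (f := fun i x => (Set.Icc (-π) π).indicator (fun t => Complex.exp (Complex.I * (m i) * t)) x)]
  refine Finset.prod_congr rfl fun i _ => ?_
  rw [integral_indicator measurableSet_Icc]
  exact key1' (m i)

private lemma inner_eq_sum' {n : ℕ} (x ξ : EuclideanSpace ℝ (Fin n)) :
    (⟪x, ξ⟫ : ℝ) = ∑ i, x i * ξ i := by
  simp [PiLp.inner_apply, RCLike.inner_apply, mul_comm]

/-- If `f ∈ L²(ℝⁿ)` has Fourier transform `g` supported in `[-π,π]ⁿ`
(so that `f` is the continuous representative given by Fourier inversion of `g`),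
then the samples `(f j)_{j ∈ ℤⁿ}` are square-summable. -/
theorem stmt0 (n : ℕ) (f g : EuclideanSpace ℝ (Fin n) → ℂ)
    (hf2 : MemLp f 2 volume)
    (hg2 : MemLp g 2 volume)
    (hsupp : ∀ ξ : EuclideanSpace ℝ (Fin n), (∃ i, π < |ξ i|) → g ξ = 0)
    (hinv : ∀ x : EuclideanSpace ℝ (Fin n),
      f x = (((2 * π) ^ (-(n : ℝ) / 2) : ℝ) : ℂ) *
        ∫ ξ, g ξ * Complex.exp (Complex.I * (⟪x, ξ⟫ : ℝ))) :
    Summable (fun j : Fin n → ℤ => ‖f (lat n j)‖ ^ 2) := by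
  set c : ℝ := (2 * π) ^ (-(n : ℝ) / 2) with hc_def
  have h2pi : (0 : ℝ) < 2 * π := by linarith [pi_pos]
  set μ : Measure (EuclideanSpace ℝ (Fin n)) := volume.restrict (Cube' n) with hμ_def
  -- finiteness of μ
  have hvol : volume (Cube' n) = (ENNReal.ofReal (2 * π)) ^ n := by
    rw [Cube', (EuclideanSpace.volume_preserving_symm_measurableEquiv_toLp (Fin n)).measure_preimage
      ((MeasurableSet.univ_pi fun _ => measurableSet_Icc).nullMeasurableSet)]
    rw [volume_pi_pi]
    simp [Real.volume_Icc]
    ring_nf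
    rw [ENNReal.ofReal_mul pi_pos.le, mul_pow, ENNReal.ofReal_ofNat]
  haveI : IsFiniteMeasure μ := by
    constructor
    rw [hμ_def, Measure.restrict_apply_univ, hvol]
    exact ENNReal.pow_lt_top ENNReal.ofReal_lt_top
  -- the exponential family
  set φ : (Fin n → ℤ) → EuclideanSpace ℝ (Fin n) → ℂ :=
    fun j ξ => (c : ℂ) * Complex.exp (-(Complex.I * ((⟪lat n j, ξ⟫ : ℝ) : ℂ))) with hφ_def
  have hφcont : ∀ j, Continuous (φ j) := by
    intro j
    apply continuous_const.mul
    apply Complex.continuous_exp.comp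
    apply Continuous.neg
    apply continuous_const.mul
    exact Complex.continuous_ofReal.comp (continuous_const.inner continuous_id)
  have hφnorm : ∀ j ξ, ‖φ j ξ‖ = |c| := by
    intro j ξ
    rw [hφ_def]
    simp [Complex.norm_exp]
  have hφmem : ∀ j, MemLp (φ j) 2 μ := by
    intro j
    exact MemLp.of_bound ((hφcont j).aestronglyMeasurable) |c|
      (Filter.Eventually.of_forall fun ξ => le_of_eq (hφnorm j ξ))
  set E : (Fin n → ℤ) → Lp ℂ 2 μ := fun j => (hφmem j).toLp (φ j) with hE_def
  have hgmem : MemLp g 2 μ := hg2.restrict _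
  set G : Lp ℂ 2 μ := hgmem.toLp g with hG_def
  -- inner product formula
  have hinner : ∀ (j : Fin n → ℤ) (F : EuclideanSpace ℝ (Fin n) → ℂ) (hF : MemLp F 2 μ),
      (inner ℂ (E j) (hF.toLp F) : ℂ) =
        ∫ ξ in Cube' n, ((c : ℂ) * Complex.exp (Complex.I * ((⟪lat n j, ξ⟫ : ℝ) : ℂ))) * F ξ := by
    intro j F hF
    rw [MeasureTheory.L2.inner_def]
    rw [← hμ_def]
    apply integral_congr_ae
    filter_upwards [(hφmem j).coeFn_toLp, hF.coeFn_toLp] with ξ h1 h2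
    rw [h1, h2, RCLike.inner_apply]
    rw [mul_comm]
    congr 1
    rw [hφ_def]
    simp only [map_mul, Complex.conj_ofReal, ← Complex.exp_conj, map_neg, Complex.conj_I]
    ring_nf
  -- orthonormality
  have hONexp : ∀ j k : Fin n → ℤ,
      (inner ℂ (E j) (E k) : ℂ) =
        (c : ℂ) * (c : ℂ) * ∏ i, (if j i - k i = 0 then (2 * π : ℂ) else 0) := by
    intro j k
    rw [hinner j (φ k) (hφmem k)]
    rw [← boxInt' n (fun i => j i - k i)]
    rw [← MeasureTheory.integral_const_mul]
    apply setIntegral_congr_fun (measurableSet_Cube' n)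
    intro ξ _
    rw [hφ_def]
    simp only
    have hd : (∑ i, (((j i - k i : ℤ)) : ℝ) * ξ i) =
        (⟪lat n j, ξ⟫ : ℝ) - (⟪lat n k, ξ⟫ : ℝ) := by
      rw [inner_eq_sum' (lat n j) ξ, inner_eq_sum' (lat n k) ξ, ← Finset.sum_sub_distrib]
      refine Finset.sum_congr rfl fun i _ => ?_
      simp only [lat]
      push_cast
      ring
    calc (c : ℂ) * Complex.exp (Complex.I * ((⟪lat n j, ξ⟫ : ℝ) : ℂ)) *
          ((c : ℂ) * Complex.exp (-(Complex.I * ((⟪lat n k, ξ⟫ : ℝ) : ℂ))))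
        = (c : ℂ) * (c : ℂ) * (Complex.exp (Complex.I * ((⟪lat n j, ξ⟫ : ℝ) : ℂ)) *
            Complex.exp (-(Complex.I * ((⟪lat n k, ξ⟫ : ℝ) : ℂ)))) := by ring
      _ = (c : ℂ) * (c : ℂ) * Complex.exp (Complex.I * ((⟪lat n j, ξ⟫ : ℝ) : ℂ) +
            -(Complex.I * ((⟪lat n k, ξ⟫ : ℝ) : ℂ))) := by rw [← Complex.exp_add]
      _ = (c : ℂ) * (c : ℂ) *
            Complex.exp (Complex.I * ((∑ i, (((j i - k i : ℤ)) : ℝ) * ξ i : ℝ) : ℂ)) := by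
          rw [hd]; push_cast; ring_nf
  have hON : Orthonormal ℂ E := by
    rw [orthonormal_iff_ite]
    intro j k
    rw [hONexp j k]
    by_cases hjk : j = k
    · subst hjk
      simp only [sub_self, if_pos rfl, if_true, Finset.prod_const, Finset.card_univ,
        Fintype.card_fin]
      have hcc : c * c = (2 * π) ^ (-(n : ℝ)) := by
        rw [hc_def, ← Real.rpow_add h2pi]
        norm_num
      have : ((2 * π : ℂ)) ^ n = (((2 * π) ^ (n : ℝ) : ℝ) : ℂ) := by
        rw [Real.rpow_natCast]
        push_cast
        ring
      rw [this, ← Complex.ofReal_mul, ← Complex.ofReal_mul, hcc, ← Real.rpow_add h2pi]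
      norm_num
    · obtain ⟨i, hi⟩ : ∃ i, j i ≠ k i := by
        by_contra h
        push_neg at h
        exact hjk (funext h)
      rw [if_neg hjk, Finset.prod_eq_zero (Finset.mem_univ i) (by simp [sub_eq_zero, hi])]
      ring
  -- samples as inner products
  have hkey : ∀ j : Fin n → ℤ, f (lat n j) = inner ℂ (E j) G := by
    intro j
    rw [hG_def, hinner j g hgmem, hinv (lat n j)]
    rw [← setIntegral_eq_integral_of_forall_compl_eq_zero (s := Cube' n)
      (f := fun ξ => g ξ * Complex.exp (Complex.I * ((⟪lat n j, ξ⟫ : ℝ) : ℂ)))]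
    · rw [← MeasureTheory.integral_const_mul]
      apply setIntegral_congr_fun (measurableSet_Cube' n)
      intro ξ _
      ring
    · intro ξ hξ
      have : ∃ i, π < |ξ i| := by
        rw [mem_Cube'] at hξ
        push_neg at hξ
        obtain ⟨i, hi⟩ := hξ
        refine ⟨i, ?_⟩
        rw [Set.mem_Icc] at hi
        rcases lt_or_ge π |ξ i| with h | h
        · exact h
        · exact absurd (abs_le.mp h) (by tauto)
      rw [hsupp ξ this]
      ring
  have := hON.inner_products_summable (x := G)
  refine this.congr fun j => ?_
  rw [hkey j]

end
end

section
/- For f ∈ PW_π (functions in L²(ℝⁿ) with Fourier transform supported in [-π,π]ⁿ), the Fourier transform satisfies (2π)^{n/2} f̂(ξ) = Σ_{j∈ℤⁿ} f(j) e^{-i j·ξ} for almost every ξ ∈ [-π,π]ⁿ, where the series converges in L²([-π,π]ⁿ). -/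
open MeasureTheory Filter Real
open scoped RealInnerProductSpace

noncomputable section

/-- The cube `[-π,π]ⁿ` in `ℝⁿ`. -/
def cube (n : ℕ) : Set (EuclideanSpace ℝ (Fin n)) := {ξ | ∀ i, |ξ i| ≤ π}

namespace PWAux

open Set Submodule
open scoped ComplexConjugate

instance fact2pi : Fact (0 < 2 * π) := ⟨by positivity⟩

abbrev Torus (n : ℕ) := Fin n → AddCircle (2 * π)

/-! ### Characters on the torus and Stone–Weierstrass -/

def mchar (n : ℕ) (j : Fin n → ℤ) : C(Torus n, ℂ) :=
  ∏ i : Fin n, ((fourier (-(j i))).comp ⟨fun x => x i, continuous_apply i⟩ : C(Torus n, ℂ))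

lemma mchar_apply (n : ℕ) (j : Fin n → ℤ) (x : Torus n) :
    mchar n j x = ∏ i : Fin n, fourier (-(j i)) (x i) := by
  simp [mchar]

lemma mchar_zero (n : ℕ) : mchar n 0 = 1 := by
  ext x; simp [mchar_apply]

lemma mchar_add (n : ℕ) (j k : Fin n → ℤ) : mchar n (j + k) = mchar n j * mchar n k := by
  ext x
  simp only [mchar_apply, ContinuousMap.mul_apply, ← Finset.prod_mul_distrib]
  refine Finset.prod_congr rfl fun i _ => ?_
  rw [Pi.add_apply, neg_add, fourier_add]

lemma mchar_conj (n : ℕ) (j : Fin n → ℤ) : star (mchar n j) = mchar n (-j) := by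
  ext x
  simp only [ContinuousMap.coe_star, Pi.star_apply, mchar_apply]
  rw [show (star : ℂ → ℂ) = starRingEnd ℂ from rfl, map_prod]
  refine Finset.prod_congr rfl fun i _ => ?_
  simp [fourier_neg]

def mSubalgebra (n : ℕ) : StarSubalgebra ℂ C(Torus n, ℂ) where
  toSubalgebra := Algebra.adjoin ℂ (range (mchar n))
  star_mem' := by
    show Algebra.adjoin ℂ (range (mchar n)) ≤ star (Algebra.adjoin ℂ (range (mchar n)))
    refine Algebra.adjoin_le ?_
    rintro - ⟨j, rfl⟩
    exact Algebra.subset_adjoin ⟨-j, (mchar_conj n j).symm⟩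

lemma mSubalgebra_coe (n : ℕ) :
    Subalgebra.toSubmodule (mSubalgebra n).toSubalgebra = span ℂ (range (mchar n)) := by
  apply Algebra.adjoin_eq_span_of_subset
  refine Subset.trans ?_ Submodule.subset_span
  intro x hx
  refine Submonoid.closure_induction (fun _ => id) ⟨0, (mchar_zero n)⟩ ?_ hx
  rintro - - - - ⟨j, rfl⟩ ⟨k, rfl⟩
  exact ⟨j + k, (mchar_add n j k)⟩

lemma mSubalgebra_separatesPoints (n : ℕ) : (mSubalgebra n).SeparatesPoints := by
  intro x y hxy
  obtain ⟨i, hi⟩ := Function.ne_iff.mp hxy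
  refine ⟨_, ⟨mchar n (-(Pi.single i 1 : Fin n → ℤ)), Algebra.subset_adjoin ⟨_, rfl⟩, rfl⟩, ?_⟩
  dsimp only
  rw [mchar_apply, mchar_apply]
  have key : ∀ z : Torus n, (∏ i' : Fin n, fourier (-((-(Pi.single i 1 : Fin n → ℤ)) i')) (z i'))
      = fourier 1 (z i) := by
    intro z
    rw [Finset.prod_eq_single i]
    · simp
    · intro b _ hb; simp [Pi.single_eq_of_ne hb]
    · simp
  rw [key, key]
  simp only [fourier_one]
  intro h
  rw [Circle.coe_inj] at h
  exact hi (AddCircle.injective_toCircle (by positivity : (0:ℝ) < 2*π).ne' h)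

lemma span_mchar_closure_eq_top (n : ℕ) :
    (span ℂ (range (mchar n))).topologicalClosure = ⊤ := by
  rw [← mSubalgebra_coe]
  exact congr_arg (Subalgebra.toSubmodule <| StarSubalgebra.toSubalgebra ·)
    (ContinuousMap.starSubalgebra_topologicalClosure_eq_top_of_separatesPoints _
      (mSubalgebra_separatesPoints n))

/-! ### The Hilbert basis of `L²` of the torus -/

abbrev TLp (n : ℕ) := Lp ℂ 2 (volume : Measure (Torus n))

def mLp (n : ℕ) (j : Fin n → ℤ) : TLp n := ContinuousMap.toLp (E := ℂ) 2 volume ℂ (mchar n j)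

lemma span_mLp_closure_eq_top (n : ℕ) :
    (span ℂ (range (mLp n))).topologicalClosure = ⊤ := by
  have h := (ContinuousMap.toLp_denseRange ℂ (volume : Measure (Torus n)) ℂ
      (by simp : (2:ENNReal) ≠ ⊤)).topologicalClosure_map_submodule
      (span_mchar_closure_eq_top n)
  rw [Submodule.map_span] at h
  have h2 : range (mLp n) =
      ⇑(ContinuousMap.toLp (E := ℂ) 2 (volume : Measure (Torus n)) ℂ) '' range (mchar n) := by
    rw [← range_comp]; rfl
  rw [h2]
  exact h

lemma integral_fourier (m : ℤ) : ∫ x : AddCircle (2*π), fourier m x ∂volume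
    = if m = 0 then ((2*π : ℝ) : ℂ) else 0 := by
  split_ifs with h
  · subst h
    have h1 : ⇑(fourier (T := 2*π) 0) = fun _ => (1:ℂ) := by ext1; exact fourier_zero
    rw [h1, integral_const, Measure.real, AddCircle.measure_univ]
    rw [ENNReal.toReal_ofReal (by positivity : (0:ℝ) ≤ 2*π)]
    simp [Complex.real_smul]
  · exact integral_eq_zero_of_add_right_eq_neg (fourier_add_half_inv_index h (by positivity))

lemma integral_mchar (n : ℕ) (j : Fin n → ℤ) : ∫ x : Torus n, mchar n j x ∂volume
    = if j = 0 then (((2*π)^n : ℝ) : ℂ) else 0 := by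
  calc ∫ x : Torus n, mchar n j x
      = ∫ x : Torus n, ∏ i, fourier (-(j i)) (x i) := by simp_rw [mchar_apply]
    _ = ∏ i, ∫ x : AddCircle (2*π), fourier (-(j i)) x :=
        MeasureTheory.integral_fintype_prod_eq_prod (fun i x => fourier (-(j i)) x)
    _ = ∏ i, if j i = 0 then ((2*π:ℝ):ℂ) else 0 := by
        refine Finset.prod_congr rfl fun i _ => ?_
        rw [integral_fourier]; simp [neg_eq_zero]
    _ = _ := by
        split_ifs with h
        · subst h; push_cast; simp
        · obtain ⟨i, hi⟩ := Function.ne_iff.mp h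
          simp only [Pi.zero_apply] at hi
          exact Finset.prod_eq_zero (Finset.mem_univ i) (if_neg hi)

def cC (n : ℕ) : ℂ := (((2*π) ^ (-(n:ℝ)/2) : ℝ) : ℂ)

lemma cC_mul_C (n : ℕ) : cC n * (((2*π) ^ ((n:ℝ)/2) : ℝ) : ℂ) = 1 := by
  rw [cC, ← Complex.ofReal_mul, ← Real.rpow_add (by positivity),
    show (-(n:ℝ)/2 + (n:ℝ)/2) = 0 by ring, Real.rpow_zero, Complex.ofReal_one]

def eb (n : ℕ) (j : Fin n → ℤ) : TLp n := cC n • mLp n j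

lemma mchar_mul_conj (n : ℕ) (j k : Fin n → ℤ) (x : Torus n) :
    conj (mchar n j x) * mchar n k x = mchar n (k - j) x := by
  simp only [mchar_apply, map_prod, ← Finset.prod_mul_distrib]
  refine Finset.prod_congr rfl fun i _ => ?_
  rw [← fourier_neg, neg_neg, ← fourier_add]
  congr 1
  simp only [Pi.sub_apply]
  ring

lemma inner_mLp (n : ℕ) (j k : Fin n → ℤ) :
    (inner ℂ (mLp n j) (mLp n k) : ℂ) = if k = j then (((2*π)^n : ℝ):ℂ) else 0 := by
  rw [mLp, mLp, ContinuousMap.inner_toLp]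
  simp_rw [mul_comm _ (conj _)]
  calc ∫ x : Torus n, conj (mchar n j x) * mchar n k x ∂volume
      = ∫ x : Torus n, mchar n (k - j) x ∂volume := by
        simp_rw [mchar_mul_conj]
    _ = _ := by rw [integral_mchar]; simp [sub_eq_zero]

lemma orthonormal_eb (n : ℕ) : Orthonormal ℂ (eb n) := by
  rw [orthonormal_iff_ite]
  intro j k
  rw [eb, eb, inner_smul_left, inner_smul_right, inner_mLp]
  have hc : conj (cC n) = cC n := Complex.conj_ofReal _
  rw [hc]
  split_ifs with h h2 h3
  · have hr : ((2*π) ^ (-(n:ℝ)/2) : ℝ) * (((2*π) ^ (-(n:ℝ)/2) : ℝ) * (2*π)^n) = 1 := by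
      rw [← Real.rpow_natCast (2*π) n, ← Real.rpow_add (by positivity),
        ← Real.rpow_add (by positivity),
        show (-(n:ℝ)/2 + (-(n:ℝ)/2 + n)) = 0 by ring, Real.rpow_zero]
    rw [cC, ← Complex.ofReal_mul, ← Complex.ofReal_mul, hr, Complex.ofReal_one]
  · exact absurd h.symm h2
  · exact absurd h3.symm h
  · simp

lemma conj_cC (n : ℕ) : conj (cC n) = cC n := Complex.conj_ofReal _

lemma cC_ne_zero (n : ℕ) : cC n ≠ 0 := by
  rw [cC]
  exact_mod_cast (Real.rpow_pos_of_pos (by positivity) _).ne'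

lemma span_eb_eq (n : ℕ) : span ℂ (range (eb n)) = span ℂ (range (mLp n)) := by
  apply le_antisymm
  · rw [span_le]
    rintro - ⟨j, rfl⟩
    exact Submodule.smul_mem _ _ (subset_span ⟨j, rfl⟩)
  · rw [span_le]
    rintro - ⟨j, rfl⟩
    have : mLp n j = (cC n)⁻¹ • eb n j := by
      rw [eb, smul_smul, inv_mul_cancel₀ (cC_ne_zero n), one_smul]
    rw [this]
    exact Submodule.smul_mem _ _ (subset_span ⟨j, rfl⟩)

def mbasis (n : ℕ) : HilbertBasis (Fin n → ℤ) ℂ (TLp n) :=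
  HilbertBasis.mk (orthonormal_eb n)
    (by rw [span_eb_eq, span_mLp_closure_eq_top])

/-! ### Measure-preserving maps between the cube and the torus -/

lemma volE (n : ℕ) : (volume : Measure (EuclideanSpace ℝ (Fin n)))
    = (Measure.pi fun _ => (volume : Measure ℝ)).map (MeasurableEquiv.toLp 2 (Fin n → ℝ)) := by
  exact (MeasurePreserving.symm _
    (EuclideanSpace.volume_preserving_symm_measurableEquiv_toLp (Fin n))).map_eq.symm

lemma cube_eq (n : ℕ) : (MeasurableEquiv.toLp 2 (Fin n → ℝ)) ⁻¹' cube n = Set.pi univ (fun _ : Fin n => Icc (-π) π) := by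
  ext ξ
  constructor
  · intro h i _; exact Set.mem_Icc.mpr (abs_le.mp (h i))
  · intro h i; exact abs_le.mpr (Set.mem_Icc.mp (h i (mem_univ i)))

lemma pi_restrict (n : ℕ) (s : Fin n → Set ℝ) (hs : ∀ i, MeasurableSet (s i)) :
    Measure.pi (fun i => (volume : Measure ℝ).restrict (s i))
      = (Measure.pi fun _ : Fin n => (volume : Measure ℝ)).restrict (Set.pi univ s) := by
  apply Measure.pi_eq
  intro t ht
  rw [Measure.restrict_apply (MeasurableSet.univ_pi ht), ← Set.pi_inter_distrib,
    Measure.pi_pi]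
  exact Finset.prod_congr rfl fun i _ =>
    (Measure.restrict_apply (ht i)).symm

lemma mu_eq (n : ℕ) : (volume : Measure (EuclideanSpace ℝ (Fin n))).restrict (cube n)
    = (Measure.pi (fun _ : Fin n => (volume : Measure ℝ).restrict (Ioc (-π) π))).map
        (MeasurableEquiv.toLp 2 (Fin n → ℝ)) := by
  rw [volE, (MeasurableEquiv.toLp 2 (Fin n → ℝ)).measurableEmbedding.restrict_map, cube_eq, ← pi_restrict n _ (fun _ => measurableSet_Icc)]
  simp_rw [MeasureTheory.restrict_Ioc_eq_restrict_Icc]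

def Phi (n : ℕ) : EuclideanSpace ℝ (Fin n) → Torus n := fun ξ i => (ξ i : AddCircle (2*π))

def Psi (n : ℕ) : Torus n → EuclideanSpace ℝ (Fin n) :=
  fun x => WithLp.toLp 2 (fun i => (AddCircle.equivIoc (2*π) (-π) (x i) : ℝ))

lemma mp_mk : MeasurePreserving (fun x : ℝ => (x : AddCircle (2*π)))
    ((volume : Measure ℝ).restrict (Ioc (-π) π)) volume := by
  have := AddCircle.measurePreserving_mk (2*π) (-π)
  rwa [show -π + 2*π = π by ring] at this

lemma psi1_measurable : Measurable (fun y : AddCircle (2*π) =>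
    ((AddCircle.equivIoc (2*π) (-π) y : ℝ))) :=
  measurable_subtype_coe.comp (AddCircle.measurableEquivIoc (2*π) (-π)).measurable

lemma psi1_mk {x : ℝ} (hx : x ∈ Ioc (-π) π) :
    ((AddCircle.equivIoc (2*π) (-π) ((x : AddCircle (2*π))) : ℝ)) = x := by
  have hx' : x ∈ Ioc (-π) (-π + 2*π) := by rwa [show -π + 2*π = π by ring]
  have : (AddCircle.equivIoc (2*π) (-π)) ((x : AddCircle (2*π))) = ⟨x, hx'⟩ := by
    rw [Equiv.apply_eq_iff_eq_symm_apply]; rfl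
  rw [this]

lemma mp_psi1 : MeasurePreserving (fun y : AddCircle (2*π) =>
      ((AddCircle.equivIoc (2*π) (-π) y : ℝ)))
    volume ((volume : Measure ℝ).restrict (Ioc (-π) π)) := by
  refine ⟨psi1_measurable, ?_⟩
  rw [← mp_mk.map_eq, Measure.map_map psi1_measurable AddCircle.measurable_mk']
  simp only [Function.comp_def]
  have : (fun x : ℝ => ((AddCircle.equivIoc (2*π) (-π) ((x : AddCircle (2*π))) : ℝ)))
      =ᵐ[(volume : Measure ℝ).restrict (Ioc (-π) π)] id := by
    filter_upwards [ae_restrict_mem measurableSet_Ioc] with x hx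
    exact psi1_mk hx
  rw [Measure.map_congr this, Measure.map_id]

lemma mp_Phi (n : ℕ) : MeasurePreserving (Phi n)
    ((volume : Measure (EuclideanSpace ℝ (Fin n))).restrict (cube n))
    (volume : Measure (Torus n)) := by
  rw [mu_eq, show (volume : Measure (Torus n)) = Measure.pi fun _ => volume from volume_pi]
  exact (measurePreserving_pi _ _ (fun _ => mp_mk)).comp (MeasurePreserving.symm _
    ((MeasurableEquiv.toLp 2 (Fin n → ℝ)).measurable.measurePreserving _))

lemma mp_Psi (n : ℕ) : MeasurePreserving (Psi n) (volume : Measure (Torus n))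
    ((volume : Measure (EuclideanSpace ℝ (Fin n))).restrict (cube n)) := by
  rw [mu_eq, show (volume : Measure (Torus n)) = Measure.pi fun _ => volume from volume_pi]
  exact ((MeasurableEquiv.toLp 2 (Fin n → ℝ)).measurable.measurePreserving _).comp
    (measurePreserving_pi _ _ (fun _ => mp_psi1))

lemma psi_phi (n : ℕ) : ∀ᵐ ξ ∂((volume : Measure (EuclideanSpace ℝ (Fin n))).restrict (cube n)),
    Psi n (Phi n ξ) = ξ := by
  rw [mu_eq, pi_restrict n _ (fun _ => measurableSet_Ioc),
    (MeasurableEquiv.toLp 2 (Fin n → ℝ)).measurableEmbedding.ae_map_iff]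
  filter_upwards [ae_restrict_mem (MeasurableSet.univ_pi fun _ => measurableSet_Ioc)] with ξ hξ
  apply congrArg (WithLp.toLp 2)
  funext i
  exact psi1_mk (hξ i (mem_univ i))

/-! ### Pointwise formulas -/

lemma inner_lat (n : ℕ) (j : Fin n → ℤ) (ξ : EuclideanSpace ℝ (Fin n)) :
    (⟪lat n j, ξ⟫ : ℝ) = ∑ i, (j i : ℝ) * ξ i := by
  simp [PiLp.inner_apply, lat, RCLike.inner_apply, mul_comm]

lemma mchar_Phi (n : ℕ) (j : Fin n → ℤ) (ξ : EuclideanSpace ℝ (Fin n)) :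
    mchar n j (Phi n ξ) = Complex.exp (-Complex.I * (⟪lat n j, ξ⟫ : ℝ)) := by
  rw [mchar_apply, inner_lat]
  have h1 : ∀ i, (fourier (-(j i)) ((ξ i : AddCircle (2*π))))
      = Complex.exp (-Complex.I * ((j i : ℝ) * ξ i : ℝ)) := by
    intro i
    rw [fourier_coe_apply]
    congr 1
    have h2π : (2 * (π:ℂ)) ≠ 0 := by
      simp [Real.pi_ne_zero, Complex.ofReal_ne_zero]
    push_cast
    field_simp
  rw [show (∏ i : Fin n, (fourier (-(j i))) (Phi n ξ i))
      = ∏ i : Fin n, Complex.exp (-Complex.I * ((j i : ℝ) * ξ i : ℝ)) from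
    Finset.prod_congr rfl fun i _ => h1 i, ← Complex.exp_sum]
  congr 1
  rw [Complex.ofReal_sum, Finset.mul_sum]

lemma L2normsq {α : Type*} [MeasurableSpace α] (ν : Measure α) (h : Lp ℂ 2 ν) :
    ‖h‖^2 = ∫ a, ‖h a‖^2 ∂ν := by
  rw [← @inner_self_eq_norm_sq ℂ _ _ _ _ h, MeasureTheory.L2.inner_def]
  rw [← integral_re (MeasureTheory.L2.integrable_inner h h)]
  apply integral_congr_ae
  filter_upwards [] with a
  rw [RCLike.inner_apply]
  rw [show h a * (starRingEnd ℂ) (h a) = ((Complex.normSq (h a) : ℝ) : ℂ) by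
    rw [Complex.mul_conj]]
  rw [show RCLike.re ((Complex.normSq (h a) : ℝ) : ℂ) = Complex.normSq (h a) from
    Complex.ofReal_re _, Complex.normSq_eq_norm_sq]

end PWAux

open PWAux
open scoped ComplexConjugate

/-- For `f ∈ PW_π` with Fourier transform `g` supported in `[-π,π]ⁿ`, the series
`Σ_j f(j) e^{-i j·ξ}` converges in `L²([-π,π]ⁿ)` to `(2π)^{n/2} g(ξ)`; in particular
`(2π)^{n/2} ĝ(ξ) = Σ_j f(j) e^{-ij·ξ}` a.e. on the cube, in the `L²` sense. -/
theorem stmt1 (n : ℕ) (f g : EuclideanSpace ℝ (Fin n) → ℂ)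
    (hf2 : MemLp f 2 volume)
    (hg2 : MemLp g 2 volume)
    (hsupp : ∀ ξ : EuclideanSpace ℝ (Fin n), (∃ i, π < |ξ i|) → g ξ = 0)
    (hinv : ∀ x : EuclideanSpace ℝ (Fin n),
      f x = (((2 * π) ^ (-(n : ℝ) / 2) : ℝ) : ℂ) *
        ∫ ξ, g ξ * Complex.exp (Complex.I * (⟪x, ξ⟫ : ℝ))) :
    Tendsto (fun s : Finset (Fin n → ℤ) =>
        ∫ ξ in cube n, ‖(((2 * π) ^ ((n : ℝ) / 2) : ℝ) : ℂ) * g ξ -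
          ∑ j ∈ s, f (lat n j) * Complex.exp (-Complex.I * (⟪lat n j, ξ⟫ : ℝ))‖ ^ 2)
      atTop (nhds 0) := by
  classical
  set C : ℂ := (((2 * π) ^ ((n : ℝ) / 2) : ℝ) : ℂ) with hCdef
  -- the `L²` element on the torus
  have hg2' : MemLp g 2 (volume.restrict (cube n)) := hg2.restrict _
  have hgΨ : MemLp (g ∘ Psi n) 2 (volume : Measure (Torus n)) :=
    hg2'.comp_measurePreserving (mp_Psi n)
  have hGmem : MemLp (fun x : Torus n => C * g (Psi n x)) 2 (volume : Measure (Torus n)) :=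
    hgΨ.const_mul C
  set G : TLp n := hGmem.toLp _ with hGdef
  -- coefficients
  have hcoef : ∀ j : Fin n → ℤ, (mbasis n).repr G j = C * f (lat n j) := by
    intro j
    rw [HilbertBasis.repr_apply_apply, mbasis, HilbertBasis.coe_mk, eb, inner_smul_left,
      conj_cC]
    have h1 : (inner ℂ (mLp n j) G : ℂ)
        = ∫ x : Torus n, conj (mchar n j x) * (C * g (Psi n x)) ∂volume := by
      rw [MeasureTheory.L2.inner_def]
      apply integral_congr_ae
      filter_upwards [ContinuousMap.coeFn_toLp (p := 2) (𝕜 := ℂ)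
        (μ := (volume : Measure (Torus n))) (mchar n j), MemLp.coeFn_toLp hGmem] with x h2 h3
      rw [RCLike.inner_apply, mLp]
      rw [h2, h3]
      ring
    have hmeas : AEStronglyMeasurable (fun x : Torus n => conj (mchar n j x) * (C * g (Psi n x)))
        (volume : Measure (Torus n)) := by
      exact ((Complex.continuous_conj.comp (mchar n j).continuous).aestronglyMeasurable).mul
        hGmem.aestronglyMeasurable
    have h2 : ∫ x : Torus n, conj (mchar n j x) * (C * g (Psi n x)) ∂volume
        = ∫ ξ, conj (mchar n j (Phi n ξ)) * (C * g (Psi n (Phi n ξ))) ∂(volume.restrict (cube n)) := by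
      rw [← (mp_Phi n).map_eq, integral_map (mp_Phi n).aemeasurable]
      rw [(mp_Phi n).map_eq]
      exact hmeas
    have h3 : ∫ ξ, conj (mchar n j (Phi n ξ)) * (C * g (Psi n (Phi n ξ))) ∂(volume.restrict (cube n))
        = C * ∫ ξ, g ξ * Complex.exp (Complex.I * (⟪lat n j, ξ⟫ : ℝ)) ∂(volume.restrict (cube n)) := by
      rw [← integral_const_mul]
      apply integral_congr_ae
      filter_upwards [psi_phi n] with ξ hξ
      rw [hξ, mchar_Phi, ← Complex.exp_conj, map_mul, map_neg, Complex.conj_I,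
        Complex.conj_ofReal]
      ring
    have h4 : ∫ ξ, g ξ * Complex.exp (Complex.I * (⟪lat n j, ξ⟫ : ℝ)) ∂(volume.restrict (cube n))
        = ∫ ξ, g ξ * Complex.exp (Complex.I * (⟪lat n j, ξ⟫ : ℝ)) := by
      apply setIntegral_eq_integral_of_forall_compl_eq_zero
      intro ξ hξ
      have hξ' : ∃ i, π < |ξ i| := by
        simpa [cube, not_forall, not_le] using hξ
      rw [hsupp ξ hξ', zero_mul]
    rw [h1, h2, h3, h4]
    rw [hinv (lat n j)]
    have : (cC n : ℂ) = (((2 * π) ^ (-(n : ℝ) / 2) : ℝ) : ℂ) := rfl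
    rw [← this]
    ring
  -- the sum converges to `G` in `L²` of the torus
  have hsum : HasSum (fun j => f (lat n j) • mLp n j) G := by
    have h := (mbasis n).hasSum_repr G
    have heq : (fun j => (mbasis n).repr G j • (mbasis n) j)
        = fun j => f (lat n j) • mLp n j := by
      funext j
      rw [hcoef j, mbasis, HilbertBasis.coe_mk, eb, smul_smul]
      congr 1
      rw [mul_comm C (f (lat n j)), mul_assoc, mul_comm C (cC n), cC_mul_C n, mul_one]
    rwa [heq] at h
  -- identification of the partial-sum norms
  have hS : ∀ s : Finset (Fin n → ℤ), (∑ j ∈ s, f (lat n j) • mLp n j)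
      = ContinuousMap.toLp (E := ℂ) 2 (volume : Measure (Torus n)) ℂ
          (∑ j ∈ s, f (lat n j) • mchar n j) := by
    intro s
    rw [map_sum]
    refine Finset.sum_congr rfl fun j _ => ?_
    rw [_root_.map_smul]
    rfl
  have key : ∀ s : Finset (Fin n → ℤ),
      (∫ ξ in cube n, ‖C * g ξ -
          ∑ j ∈ s, f (lat n j) * Complex.exp (-Complex.I * (⟪lat n j, ξ⟫ : ℝ))‖ ^ 2)
      = ‖G - ∑ j ∈ s, f (lat n j) • mLp n j‖^2 := by
    intro s
    rw [L2normsq]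
    have hcs := ContinuousMap.coeFn_toLp (p := 2) (𝕜 := ℂ)
        (μ := (volume : Measure (Torus n))) (∑ j ∈ s, f (lat n j) • mchar n j)
    rw [← hS s] at hcs
    have hae : (⇑(G - ∑ j ∈ s, f (lat n j) • mLp n j) : Torus n → ℂ) =ᵐ[volume]
        fun x => C * g (Psi n x) - (∑ j ∈ s, f (lat n j) • mchar n j : C(Torus n, ℂ)) x := by
      filter_upwards [Lp.coeFn_sub G (∑ j ∈ s, f (lat n j) • mLp n j),
        MemLp.coeFn_toLp hGmem, hcs] with x h1 h2 h3
      rw [h1, Pi.sub_apply, h2, h3]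
    have hstep1 : ∫ a, ‖(G - ∑ j ∈ s, f (lat n j) • mLp n j) a‖^2 ∂(volume : Measure (Torus n))
        = ∫ x : Torus n, ‖C * g (Psi n x)
            - (∑ j ∈ s, f (lat n j) • mchar n j : C(Torus n, ℂ)) x‖^2 ∂volume := by
      apply integral_congr_ae
      filter_upwards [hae] with x hx
      rw [hx]
    have hmeas2 : AEStronglyMeasurable (fun x : Torus n => ‖C * g (Psi n x)
        - (∑ j ∈ s, f (lat n j) • mchar n j : C(Torus n, ℂ)) x‖^2)
        (volume : Measure (Torus n)) := by
      exact (((hGmem.aestronglyMeasurable).sub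
        (∑ j ∈ s, f (lat n j) • mchar n j : C(Torus n, ℂ)).continuous.aestronglyMeasurable).norm).pow 2
    have hstep2 : ∫ x : Torus n, ‖C * g (Psi n x)
            - (∑ j ∈ s, f (lat n j) • mchar n j : C(Torus n, ℂ)) x‖^2 ∂volume
        = ∫ ξ, ‖C * g (Psi n (Phi n ξ))
            - (∑ j ∈ s, f (lat n j) • mchar n j : C(Torus n, ℂ)) (Phi n ξ)‖^2 ∂(volume.restrict (cube n)) := by
      rw [← (mp_Phi n).map_eq, integral_map (mp_Phi n).aemeasurable]
      rw [(mp_Phi n).map_eq]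
      exact hmeas2
    have hstep3 : ∫ ξ, ‖C * g (Psi n (Phi n ξ))
            - (∑ j ∈ s, f (lat n j) • mchar n j : C(Torus n, ℂ)) (Phi n ξ)‖^2 ∂(volume.restrict (cube n))
        = ∫ ξ, ‖C * g ξ -
            ∑ j ∈ s, f (lat n j) * Complex.exp (-Complex.I * (⟪lat n j, ξ⟫ : ℝ))‖^2 ∂(volume.restrict (cube n)) := by
      apply integral_congr_ae
      filter_upwards [psi_phi n] with ξ hξ
      rw [hξ]
      have hsum_eq : (∑ j ∈ s, f (lat n j) • mchar n j : C(Torus n, ℂ)) (Phi n ξ)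
          = ∑ j ∈ s, f (lat n j) * Complex.exp (-Complex.I * (⟪lat n j, ξ⟫ : ℝ)) := by
        have h5 : (∑ j ∈ s, f (lat n j) • mchar n j : C(Torus n, ℂ)) (Phi n ξ)
            = ∑ j ∈ s, (f (lat n j) • mchar n j : C(Torus n, ℂ)) (Phi n ξ) := by
          simp
        rw [h5]
        refine Finset.sum_congr rfl fun j _ => ?_
        rw [ContinuousMap.coe_smul, Pi.smul_apply, smul_eq_mul, mchar_Phi]
      rw [hsum_eq]
    rw [← hstep3, ← hstep2, ← hstep1]
  -- conclusion
  have h1 : Tendsto (fun s : Finset (Fin n → ℤ) => ∑ j ∈ s, f (lat n j) • mLp n j)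
      atTop (nhds G) := hsum
  have h2 : Tendsto (fun s : Finset (Fin n → ℤ) =>
      ‖G - ∑ j ∈ s, f (lat n j) • mLp n j‖^2) atTop (nhds 0) := by
    have h3 : Tendsto (fun s : Finset (Fin n → ℤ) => G - ∑ j ∈ s, f (lat n j) • mLp n j)
        atTop (nhds (G - G)) := tendsto_const_nhds.sub h1
    rw [sub_self] at h3
    have h4 := h3.norm
    rw [norm_zero] at h4
    have h5 := h4.pow 2
    rw [show (0:ℝ)^2 = 0 by norm_num] at h5
    exact h5
  exact h2.congr (fun s => (key s).symm)

end
end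

section
/- Let L : ℝⁿ → ℂ be measurable with |L(x)| ≤ C/(1 + ‖x‖^{n+1}) for all x. Then for 1 ≤ p ≤ ∞ and any (c_j)_{j∈ℤⁿ} ∈ ℓᵖ(ℤⁿ), the function I(x) = Σ_{j∈ℤⁿ} c_j L(x - j) belongs to Lᵖ(ℝⁿ), and there exists a constant C_p independent of (c_j) with ‖I‖_{Lᵖ(ℝⁿ)} ≤ C_p ‖(c_j)‖_{ℓᵖ(ℤⁿ)}. -/
open MeasureTheory Filter Real

noncomputable section

lemma ofReal_norm_eq_coe_nnnorm {E : Type*} [SeminormedAddCommGroup E] (a : E) :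
    ENNReal.ofReal ‖a‖ = (‖a‖₊ : ENNReal) := ofReal_norm a

namespace Stmt7Aux
open ENNReal

lemma tsum_pi_prod : ∀ (n : ℕ) (f : ℤ → ℝ≥0∞),
    ∑' m : Fin n → ℤ, ∏ i, f (m i) = (∑' k, f k) ^ n := by
  intro n
  induction n with
  | zero =>
    intro f
    rw [tsum_eq_single (fun i => (0:ℤ)) (by intro b hb; exact absurd (funext fun i => i.elim0) hb)]
    simp
  | succ n ih =>
    intro f
    rw [← (Fin.consEquiv (fun _ : Fin (n+1) => ℤ)).tsum_eq]
    rw [ENNReal.tsum_prod']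
    simp only [Fin.consEquiv_apply, Fin.prod_univ_succ, Fin.cons_zero, Fin.cons_succ]
    rw [pow_succ, ← ih f]
    calc ∑' (a:ℤ), ∑' (b : Fin n → ℤ), f a * ∏ i, f (b i)
        = ∑' (a:ℤ), f a * ∑' (b : Fin n → ℤ), ∏ i, f (b i) :=
          tsum_congr fun a => ENNReal.tsum_mul_left
      _ = (∑' k, f k) * ∑' (b : Fin n → ℤ), ∏ i, f (b i) := ENNReal.tsum_mul_right
      _ = _ := mul_comm _ _

lemma one_add_pow_le (t : ℝ) (ht : 0 ≤ t) (m : ℕ) : (1+t)^m ≤ 2^m * (1+t^m) := by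
  calc (1+t)^m ≤ (2 * max 1 t)^m := by
        apply pow_le_pow_left₀ (by positivity)
        rcases le_total t 1 with h | h
        · calc 1 + t ≤ 2 := by linarith
            _ ≤ 2 * max 1 t := by nlinarith [le_max_left (1:ℝ) t]
        · calc 1 + t ≤ t + t := by linarith
            _ = 2 * t := by ring
            _ ≤ 2 * max 1 t := by nlinarith [le_max_right (1:ℝ) t]
    _ = 2^m * (max 1 t)^m := mul_pow _ _ _
    _ ≤ 2^m * (1 + t^m) := by
        gcongr
        rcases le_total t 1 with h | h
        · rw [max_eq_left h]; simp; positivity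
        · rw [max_eq_right h]; nlinarith [pow_nonneg ht m]

lemma inv_pow_le (t : ℝ) (ht : 0 ≤ t) (m : ℕ) :
    1 / (1 + t^m) ≤ 2^m * ((1+t)^m)⁻¹ := by
  rw [← div_eq_mul_inv, div_le_div_iff₀ (by positivity) (by positivity), one_mul]
  exact one_add_pow_le t ht m

lemma T_summable {s : ℝ} (hs : 1 < s) :
    Summable (fun k : ℤ => (1+|(k:ℝ)|) ^ (-s)) := by
  have h2 : Summable (fun k : ℤ => if k = 0 then (1:ℝ) else 0) := by
    apply summable_of_ne_finset_zero (s := {0})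
    intro b hb
    simp only [Finset.mem_singleton] at hb
    simp [hb]
  apply ((Real.summable_abs_int_rpow hs).add h2).of_nonneg_of_le
    (fun k => Real.rpow_nonneg (by positivity) _)
  intro k
  by_cases hk : k = 0
  · subst hk
    simp [Real.one_rpow, Real.zero_rpow (by linarith : -s ≠ 0)]
  · have h1 : (1:ℝ) ≤ |(k:ℝ)| := by
      rw [← Int.cast_abs]
      exact_mod_cast Int.one_le_abs hk
    have : (1+|(k:ℝ)|) ^ (-s) ≤ |(k:ℝ)| ^ (-s) :=
      Real.rpow_le_rpow_of_nonpos (by linarith) (by linarith) (by linarith)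
    simp only [hk, if_false, add_zero]
    exact this

lemma T_ne_top {s : ℝ} (hs : 1 < s) :
    (∑' k : ℤ, ENNReal.ofReal ((1+|(k:ℝ)|) ^ (-s))) ≠ ∞ := by
  rw [← ENNReal.ofReal_tsum_of_nonneg (fun k => Real.rpow_nonneg (by positivity) _) (T_summable hs)]
  exact ENNReal.ofReal_ne_top

lemma lat_sub (n : ℕ) (j k : Fin n → ℤ) : lat n (j - k) = lat n j - lat n k := by
  ext i
  simp [lat]

lemma coord_le {n : ℕ} (y : EuclideanSpace ℝ (Fin n)) (i : Fin n) : |y i| ≤ ‖y‖ := by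
  rw [EuclideanSpace.norm_eq]
  rw [← Real.sqrt_sq_eq_abs]
  apply Real.sqrt_le_sqrt
  have : |y i| ^ 2 ≤ ∑ j, ‖y j‖ ^ 2 := by
    have := Finset.single_le_sum (f := fun j => ‖y j‖ ^ 2) (fun j _ => by positivity)
      (Finset.mem_univ i)
    simpa [Real.norm_eq_abs, sq_abs] using this
  simpa [sq_abs] using this

lemma round_close {n : ℕ} (x : EuclideanSpace ℝ (Fin n)) :
    ‖x - lat n (fun i => round (x i))‖ ≤ Real.sqrt n := by
  rw [EuclideanSpace.norm_eq]
  apply Real.sqrt_le_sqrt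
  calc ∑ i, ‖(x - lat n (fun i => round (x i))) i‖ ^ 2
      ≤ ∑ _i : Fin n, (1:ℝ) := by
        apply Finset.sum_le_sum
        intro i _
        have h1 : (x - lat n (fun i => round (x i))) i = x i - (round (x i) : ℝ) := rfl
        rw [h1, Real.norm_eq_abs]
        have h2 : |x i - (round (x i) : ℝ)| ≤ 1/2 := abs_sub_round (x i)
        nlinarith [abs_nonneg (x i - (round (x i):ℝ))]
    _ = n := by simp

lemma ofReal_prod_of_nonneg {ι : Type*} (s : Finset ι) (f : ι → ℝ) (hf : ∀ i ∈ s, 0 ≤ f i) :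
    ENNReal.ofReal (∏ i ∈ s, f i) = ∏ i ∈ s, ENNReal.ofReal (f i) := by
  induction s using Finset.cons_induction with
  | empty => simp
  | cons a s ha ih =>
    rw [Finset.prod_cons, Finset.prod_cons, ENNReal.ofReal_mul (hf a (Finset.mem_cons_self a s)),
      ih (fun i hi => hf i (Finset.mem_cons_of_mem hi))]

lemma sum_bound (n : ℕ) : ∃ A : ℝ≥0∞, A ≠ ∞ ∧ ∀ x : EuclideanSpace ℝ (Fin n),
    (∑' j : Fin n → ℤ, ENNReal.ofReal (1 / (1 + ‖x - lat n j‖ ^ (n+1)))) ≤ A := by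
  rcases Nat.eq_zero_or_pos n with hn | hn
  · subst hn
    refine ⟨1, one_ne_top, fun x => ?_⟩
    rw [tsum_eq_single (fun i => (0:ℤ)) (by intro b hb; exact absurd (funext fun i => i.elim0) hb)]
    apply ENNReal.ofReal_le_one.mpr
    rw [div_le_one (by positivity)]
    nlinarith [pow_nonneg (norm_nonneg (x - lat 0 fun _ => (0:ℤ))) (0+1)]
  · set s : ℝ := (n+1)/n with hs_def
    have hn' : (0:ℝ) < n := by exact_mod_cast hn
    have hs : 1 < s := by rw [hs_def, lt_div_iff₀ hn']; linarith
    set K : ℝ := 2^(n+1) * (1+Real.sqrt n)^(n+1) with hK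
    have hsqn : (0:ℝ) ≤ Real.sqrt n := Real.sqrt_nonneg n
    have hK0 : 0 ≤ K := by positivity
    set T : ℝ≥0∞ := ∑' k : ℤ, ENNReal.ofReal ((1+|(k:ℝ)|) ^ (-s)) with hT
    refine ⟨ENNReal.ofReal K * T ^ n,
      ENNReal.mul_ne_top ENNReal.ofReal_ne_top (ENNReal.pow_ne_top (T_ne_top hs)), fun x => ?_⟩
    set k : Fin n → ℤ := fun i => round (x i) with hkdef
    have hpt : ∀ j : Fin n → ℤ, ENNReal.ofReal (1 / (1 + ‖x - lat n j‖ ^ (n+1)))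
        ≤ ENNReal.ofReal K * ∏ i, ENNReal.ofReal ((1+|(((k - j) i):ℝ)|) ^ (-s)) := by
      intro j
      set m : Fin n → ℤ := k - j with hm
      set y : EuclideanSpace ℝ (Fin n) := x - lat n j with hy
      have hy0 : (0:ℝ) ≤ ‖y‖ := norm_nonneg _
      have hlm0 : (0:ℝ) ≤ ‖lat n m‖ := norm_nonneg _
      -- step B
      have hB : 1 + ‖lat n m‖ ≤ (1+Real.sqrt n) * (1+‖y‖) := by
        have hb1 : ‖lat n m‖ ≤ Real.sqrt n + ‖y‖ := by
          rw [hm, lat_sub]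
          calc ‖lat n k - lat n j‖ = ‖(lat n k - x) + (x - lat n j)‖ := by abel_nf
            _ ≤ ‖lat n k - x‖ + ‖x - lat n j‖ := norm_add_le _ _
            _ ≤ Real.sqrt n + ‖y‖ := by
                rw [norm_sub_rev, hy]
                exact add_le_add_left (round_close x) _
        nlinarith
      -- step C
      have hC : ((1+‖y‖)^(n+1))⁻¹ ≤ (1+Real.sqrt n)^(n+1) * ((1+‖lat n m‖)^(n+1))⁻¹ := by
        have hrw : (1+Real.sqrt n)^(n+1) * ((1+‖lat n m‖)^(n+1))⁻¹
            = (1+Real.sqrt n)^(n+1) / (1+‖lat n m‖)^(n+1) := (div_eq_mul_inv _ _).symm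
        rw [hrw, inv_eq_one_div, div_le_div_iff₀ (by positivity) (by positivity), one_mul]
        calc (1+‖lat n m‖)^(n+1) ≤ ((1+Real.sqrt n) * (1+‖y‖))^(n+1) :=
              pow_le_pow_left₀ (by positivity) hB _
          _ = (1+Real.sqrt n)^(n+1) * (1+‖y‖)^(n+1) := mul_pow _ _ _
      -- step D
      have hD : ((1+‖lat n m‖)^(n+1))⁻¹ ≤ ∏ i, (1+|((m i):ℝ)|) ^ (-s) := by
        have hstep : ∀ i : Fin n, (1+‖lat n m‖) ^ (-s) ≤ (1+|((m i):ℝ)|) ^ (-s) := by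
          intro i
          apply Real.rpow_le_rpow_of_nonpos (by positivity) _ (by linarith)
          have : |((m i):ℝ)| ≤ ‖lat n m‖ := coord_le (lat n m) i
          linarith
        calc ((1+‖lat n m‖)^(n+1))⁻¹ = (1+‖lat n m‖) ^ (-((n:ℝ)+1)) := by
              rw [Real.rpow_neg (by positivity), ← Real.rpow_natCast (1+‖lat n m‖) (n+1)]
              norm_num
          _ = ((1+‖lat n m‖) ^ (-s)) ^ (n:ℕ) := by
              rw [← Real.rpow_natCast ((1+‖lat n m‖) ^ (-s)) n, ← Real.rpow_mul (by positivity)]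
              congr 1
              rw [hs_def]
              field_simp
          _ = ∏ _i : Fin n, (1+‖lat n m‖) ^ (-s) := by
              rw [Finset.prod_const, Finset.card_univ, Fintype.card_fin]
          _ ≤ ∏ i, (1+|((m i):ℝ)|) ^ (-s) :=
              Finset.prod_le_prod (fun i _ => Real.rpow_nonneg (by positivity) _)
                (fun i _ => hstep i)
      -- combine
      have hreal : 1 / (1 + ‖y‖ ^ (n+1)) ≤ K * ∏ i, (1+|((m i):ℝ)|) ^ (-s) := by
        calc 1 / (1 + ‖y‖ ^ (n+1)) ≤ 2^(n+1) * ((1+‖y‖)^(n+1))⁻¹ := inv_pow_le ‖y‖ hy0 (n+1)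
          _ ≤ 2^(n+1) * ((1+Real.sqrt n)^(n+1) * ((1+‖lat n m‖)^(n+1))⁻¹) := by
              apply mul_le_mul_of_nonneg_left hC (by positivity)
          _ = K * ((1+‖lat n m‖)^(n+1))⁻¹ := by rw [hK]; ring
          _ ≤ K * ∏ i, (1+|((m i):ℝ)|) ^ (-s) := mul_le_mul_of_nonneg_left hD hK0
      calc ENNReal.ofReal (1 / (1 + ‖x - lat n j‖ ^ (n+1)))
          ≤ ENNReal.ofReal (K * ∏ i, (1+|((m i):ℝ)|) ^ (-s)) := ENNReal.ofReal_le_ofReal hreal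
        _ = ENNReal.ofReal K * ∏ i, ENNReal.ofReal ((1+|((m i):ℝ)|) ^ (-s)) := by
            rw [ENNReal.ofReal_mul hK0,
              ofReal_prod_of_nonneg _ _ (fun i _ => Real.rpow_nonneg (by positivity) _)]
    calc ∑' j : Fin n → ℤ, ENNReal.ofReal (1 / (1 + ‖x - lat n j‖ ^ (n+1)))
        ≤ ∑' j : Fin n → ℤ, ENNReal.ofReal K *
            ∏ i, ENNReal.ofReal ((1+|(((k - j) i):ℝ)|) ^ (-s)) :=
          ENNReal.tsum_le_tsum hpt
      _ = ENNReal.ofReal K * ∑' j : Fin n → ℤ,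
            ∏ i, ENNReal.ofReal ((1+|(((k - j) i):ℝ)|) ^ (-s)) := ENNReal.tsum_mul_left
      _ = ENNReal.ofReal K * ∑' m : Fin n → ℤ,
            ∏ i, ENNReal.ofReal ((1+|((m i):ℝ)|) ^ (-s)) := by
          congr 1
          exact (Equiv.subLeft k).tsum_eq
            (fun m : Fin n → ℤ => ∏ i, ENNReal.ofReal ((1+|((m i):ℝ)|) ^ (-s)))
      _ = ENNReal.ofReal K * T ^ n := by
          rw [tsum_pi_prod n (fun z : ℤ => ENNReal.ofReal ((1+|(z:ℝ)|) ^ (-s)))]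

lemma int_bound (n : ℕ) : ∃ B : ℝ≥0∞, B ≠ ∞ ∧
    (∫⁻ x : EuclideanSpace ℝ (Fin n), ENNReal.ofReal (1 / (1 + ‖x‖ ^ (n+1)))) ≤ B := by
  have hfin : (∫⁻ x : EuclideanSpace ℝ (Fin n),
      ENNReal.ofReal ((1 + ‖x‖) ^ (-((n:ℝ)+1)))) < ∞ := by
    apply finite_integral_one_add_norm
    rw [finrank_euclideanSpace_fin]
    linarith
  refine ⟨2^(n+1) * ∫⁻ x : EuclideanSpace ℝ (Fin n),
      ENNReal.ofReal ((1 + ‖x‖) ^ (-((n:ℝ)+1))),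
    ENNReal.mul_ne_top (by simp) hfin.ne, ?_⟩
  have hpt : ∀ x : EuclideanSpace ℝ (Fin n), ENNReal.ofReal (1 / (1 + ‖x‖ ^ (n+1)))
      ≤ 2^(n+1) * ENNReal.ofReal ((1 + ‖x‖) ^ (-((n:ℝ)+1))) := by
    intro x
    have h1 : (1 + ‖x‖) ^ (-((n:ℝ)+1)) = ((1+‖x‖)^(n+1))⁻¹ := by
      rw [Real.rpow_neg (by positivity), ← Real.rpow_natCast (1+‖x‖) (n+1)]
      norm_num
    rw [h1]
    calc ENNReal.ofReal (1 / (1 + ‖x‖ ^ (n+1)))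
        ≤ ENNReal.ofReal ((2:ℝ)^(n+1) * ((1+‖x‖)^(n+1))⁻¹) :=
          ENNReal.ofReal_le_ofReal (inv_pow_le ‖x‖ (norm_nonneg x) (n+1))
      _ = ENNReal.ofReal ((2:ℝ)^(n+1)) * ENNReal.ofReal (((1+‖x‖)^(n+1))⁻¹) :=
          ENNReal.ofReal_mul (by positivity)
      _ = 2^(n+1) * ENNReal.ofReal (((1+‖x‖)^(n+1))⁻¹) := by
          rw [ENNReal.ofReal_pow (by norm_num)]
          norm_num
  calc (∫⁻ x : EuclideanSpace ℝ (Fin n), ENNReal.ofReal (1 / (1 + ‖x‖ ^ (n+1))))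
      ≤ ∫⁻ x : EuclideanSpace ℝ (Fin n),
          2^(n+1) * ENNReal.ofReal ((1 + ‖x‖) ^ (-((n:ℝ)+1))) := lintegral_mono hpt
    _ = 2^(n+1) * ∫⁻ x : EuclideanSpace ℝ (Fin n),
          ENNReal.ofReal ((1 + ‖x‖) ^ (-((n:ℝ)+1))) := lintegral_const_mul' _ _ (by simp)

lemma nnnorm_tsum_le {ι : Type*} [Countable ι] (f : ι → ℂ)
    (h : (∑' i, (‖f i‖₊ : ℝ≥0∞)) ≠ ∞) :
    (‖∑' i, f i‖₊ : ℝ≥0∞) ≤ ∑' i, (‖f i‖₊ : ℝ≥0∞) := by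
  have hs : Summable fun i => ‖f i‖₊ := ENNReal.tsum_coe_ne_top_iff_summable.mp h
  have hsn : Summable fun i => ‖f i‖ := by
    simpa [← NNReal.summable_coe, coe_nnnorm] using hs
  calc (‖∑' i, f i‖₊ : ℝ≥0∞) = ENNReal.ofReal ‖∑' i, f i‖ :=
        (ofReal_norm_eq_coe_nnnorm _).symm
    _ ≤ ENNReal.ofReal (∑' i, ‖f i‖) :=
        ENNReal.ofReal_le_ofReal (norm_tsum_le_tsum_norm hsn)
    _ = ∑' i, ENNReal.ofReal ‖f i‖ :=
        ENNReal.ofReal_tsum_of_nonneg (fun i => norm_nonneg _) hsn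
    _ = ∑' i, (‖f i‖₊ : ℝ≥0∞) := tsum_congr fun i => ofReal_norm_eq_coe_nnnorm (f i)

lemma holder_tsum {ι : Type*} [Countable ι] (a w : ι → ℝ≥0∞) {pr : ℝ} (hpr : 1 ≤ pr)
    {A : ℝ≥0∞} (hw : ∑' j, w j ≤ A) :
    (∑' j, a j * w j) ^ pr ≤ A ^ (pr - 1) * ∑' j, (a j)^pr * w j := by
  rcases eq_or_lt_of_le hpr with heq | hlt
  · subst heq  -- pr = 1? heq : 1 = pr
    simp only [ENNReal.rpow_one, sub_self, ENNReal.rpow_zero, one_mul]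
    exact le_refl _
  · letI : MeasurableSpace ι := ⊤
    haveI : MeasurableSingletonClass ι := ⟨fun _ => trivial⟩
    set q : ℝ := pr / (pr - 1) with hq
    have hpq : pr.HolderConjugate q := Real.HolderConjugate.conjExponent hlt
    have hprpos : 0 < pr := by linarith
    have hqpos : 0 < q := hpq.symm.pos
    have key := ENNReal.lintegral_mul_le_Lp_mul_Lq (Measure.count (α := ι)) hpq
      (f := fun j => a j * (w j) ^ (1/pr)) (g := fun j => (w j) ^ (1/q))
      (measurable_of_countable _).aemeasurable (measurable_of_countable _).aemeasurable
    rw [lintegral_count, lintegral_count, lintegral_count] at key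
    have h1 : ∀ j, (a j * (w j) ^ (1/pr)) * (w j) ^ (1/q) = a j * w j := by
      intro j
      rw [mul_assoc, ← ENNReal.rpow_add_of_nonneg _ _ (by positivity) (by positivity),
        show 1/pr + 1/q = 1 by rw [one_div, one_div, hpq.inv_add_inv_eq_one], ENNReal.rpow_one]
    have h2 : ∀ j, (a j * (w j) ^ (1/pr)) ^ pr = (a j)^pr * w j := by
      intro j
      rw [ENNReal.mul_rpow_of_nonneg _ _ hprpos.le, ← ENNReal.rpow_mul,
        one_div_mul_cancel hprpos.ne', ENNReal.rpow_one]
    have h3 : ∀ j, ((w j) ^ (1/q)) ^ q = w j := by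
      intro j
      rw [← ENNReal.rpow_mul, one_div_mul_cancel hqpos.ne', ENNReal.rpow_one]
    simp only [Pi.mul_apply, h1, h2, h3] at key
    -- key : ∑' j, a j * w j ≤ (∑' j, a j ^ pr * w j) ^ (1/pr) * (∑' j, w j) ^ (1/q)
    calc (∑' j, a j * w j) ^ pr
        ≤ ((∑' j, (a j)^pr * w j) ^ (1/pr) * (∑' j, w j) ^ (1/q)) ^ pr :=
          ENNReal.rpow_le_rpow key hprpos.le
      _ = ((∑' j, (a j)^pr * w j) ^ (1/pr)) ^ pr * ((∑' j, w j) ^ (1/q)) ^ pr :=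
          ENNReal.mul_rpow_of_nonneg _ _ hprpos.le
      _ = (∑' j, (a j)^pr * w j) * (∑' j, w j) ^ (pr - 1) := by
          rw [← ENNReal.rpow_mul, one_div_mul_cancel hprpos.ne', ENNReal.rpow_one,
            ← ENNReal.rpow_mul]
          congr 2
          rw [hq]
          field_simp
      _ ≤ (∑' j, (a j)^pr * w j) * A ^ (pr - 1) :=
          mul_le_mul_right (ENNReal.rpow_le_rpow hw (by linarith)) _
      _ = A ^ (pr - 1) * ∑' j, (a j)^pr * w j := mul_comm _ _

end Stmt7Aux


open scoped ENNReal

/-- If `L` is measurable with `|L(x)| ≤ C/(1+‖x‖^{n+1})`, then for `1 ≤ p ≤ ∞` and any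
`(c_j) ∈ ℓᵖ(ℤⁿ)`, the function `I(x) = Σ_j c_j L(x-j)` is in `Lᵖ(ℝⁿ)` with
`‖I‖_{Lᵖ} ≤ C_p ‖c‖_{ℓᵖ}` for a constant `C_p` independent of `(c_j)`. -/
theorem stmt7 (n : ℕ) (L : EuclideanSpace ℝ (Fin n) → ℂ) (C : ℝ)
    (hLmeas : Measurable L)
    (hLbd : ∀ x : EuclideanSpace ℝ (Fin n), ‖L x‖ ≤ C / (1 + ‖x‖ ^ (n + 1)))
    (p : ENNReal) (hp : 1 ≤ p) :
    ∃ Cp : ℝ, 0 < Cp ∧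
      ∀ (c : (Fin n → ℤ) → ℂ) (hc : Memℓp c p),
        MemLp (fun x : EuclideanSpace ℝ (Fin n) =>
          ∑' j : Fin n → ℤ, c j * L (x - lat n j)) p volume ∧
        eLpNorm (fun x : EuclideanSpace ℝ (Fin n) =>
            ∑' j : Fin n → ℤ, c j * L (x - lat n j)) p volume ≤
          ENNReal.ofReal (Cp * ‖(⟨c, hc⟩ : lp (fun _ : (Fin n → ℤ) => ℂ) p)‖) := by
  classical
  have hC : 0 ≤ C := by
    have h0 := (norm_nonneg (L 0)).trans (hLbd 0)
    have hden : (0:ℝ) < 1 + ‖(0 : EuclideanSpace ℝ (Fin n))‖ ^ (n+1) := by positivity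
    have := (le_div_iff₀ hden).mp h0
    simpa using this
  obtain ⟨A, hAtop, hA⟩ := Stmt7Aux.sum_bound n
  obtain ⟨B, hBtop, hB⟩ := Stmt7Aux.int_bound n
  have hp0 : p ≠ 0 := (lt_of_lt_of_le zero_lt_one hp).ne'
  haveI : Fact (1 ≤ p) := ⟨hp⟩
  set CA : ℝ≥0∞ := ENNReal.ofReal C * A with hCA
  have hCAtop : CA ≠ ∞ := ENNReal.mul_ne_top ENNReal.ofReal_ne_top hAtop
  set CB : ℝ≥0∞ := ENNReal.ofReal C * B with hCB
  have hCBtop : CB ≠ ∞ := ENNReal.mul_ne_top ENNReal.ofReal_ne_top hBtop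
  have hgL : ∀ (j : Fin n → ℤ) (x : EuclideanSpace ℝ (Fin n)),
      (‖L (x - lat n j)‖₊ : ℝ≥0∞)
      ≤ ENNReal.ofReal C * ENNReal.ofReal (1 / (1 + ‖x - lat n j‖ ^ (n+1))) := by
    intro j x
    rw [← ofReal_norm_eq_coe_nnnorm, ← ENNReal.ofReal_mul hC]
    apply ENNReal.ofReal_le_ofReal
    calc ‖L (x - lat n j)‖ ≤ C / (1 + ‖x - lat n j‖^(n+1)) := hLbd _
      _ = C * (1 / (1 + ‖x - lat n j‖^(n+1))) := by ring
  have hsum_gL : ∀ x : EuclideanSpace ℝ (Fin n),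
      (∑' j : Fin n → ℤ, (‖L (x - lat n j)‖₊ : ℝ≥0∞)) ≤ CA := by
    intro x
    calc ∑' j : Fin n → ℤ, (‖L (x - lat n j)‖₊ : ℝ≥0∞)
        ≤ ∑' j : Fin n → ℤ, ENNReal.ofReal C *
            ENNReal.ofReal (1 / (1 + ‖x - lat n j‖^(n+1))) :=
          ENNReal.tsum_le_tsum (fun j => hgL j x)
      _ = ENNReal.ofReal C * ∑' j : Fin n → ℤ,
            ENNReal.ofReal (1/(1+‖x - lat n j‖^(n+1))) := ENNReal.tsum_mul_left
      _ ≤ CA := mul_le_mul_right (hA x) _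
  have hLmeas' : ∀ j : Fin n → ℤ,
      Measurable (fun x : EuclideanSpace ℝ (Fin n) => (‖L (x - lat n j)‖₊ : ℝ≥0∞)) :=
    fun j => (hLmeas.comp (measurable_id.sub measurable_const)).nnnorm.coe_nnreal_ennreal
  have hint_gL : ∀ j : Fin n → ℤ, (∫⁻ x, (‖L (x - lat n j)‖₊ : ℝ≥0∞)) ≤ CB := by
    intro j
    calc ∫⁻ x, (‖L (x - lat n j)‖₊ : ℝ≥0∞)
        ≤ ∫⁻ x, ENNReal.ofReal C * ENNReal.ofReal (1/(1+‖x - lat n j‖^(n+1))) :=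
          lintegral_mono (hgL j)
      _ = ENNReal.ofReal C * ∫⁻ x, ENNReal.ofReal (1/(1+‖x - lat n j‖^(n+1))) :=
          lintegral_const_mul' _ _ ENNReal.ofReal_ne_top
      _ = ENNReal.ofReal C * ∫⁻ x, ENNReal.ofReal (1/(1+‖x‖^(n+1))) := by
          congr 1
          exact lintegral_sub_right_eq_self
            (fun x : EuclideanSpace ℝ (Fin n) => ENNReal.ofReal (1/(1+‖x‖^(n+1)))) (lat n j)
      _ ≤ CB := mul_le_mul_right hB _
  -- per-c facts, stated as a general helper
  have percf : ∀ (c : (Fin n → ℤ) → ℂ), (∀ j, (‖c j‖₊ : ℝ≥0∞) ≠ ∞) → True := fun _ _ => trivial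
  clear percf
  rcases eq_or_ne p ∞ with hptop | hptop
  · -- p = ∞
    refine ⟨max 1 CA.toReal, lt_of_lt_of_le zero_lt_one (le_max_left _ _), ?_⟩
    intro c hc
    set qq : lp (fun _ : (Fin n → ℤ) => ℂ) p := ⟨c, hc⟩ with hqq
    have hcb : ∀ j, ‖c j‖ ≤ ‖qq‖ := fun j => lp.norm_apply_le_norm hp0 qq j
    have hfin : ∀ x : EuclideanSpace ℝ (Fin n),
        (∑' j : Fin n → ℤ, (‖c j * L (x - lat n j)‖₊ : ℝ≥0∞))
          ≤ ENNReal.ofReal ‖qq‖ * CA := by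
      intro x
      calc ∑' j : Fin n → ℤ, (‖c j * L (x - lat n j)‖₊ : ℝ≥0∞)
          ≤ ∑' j : Fin n → ℤ, ENNReal.ofReal ‖qq‖ * (‖L (x - lat n j)‖₊ : ℝ≥0∞) := by
            apply ENNReal.tsum_le_tsum
            intro j
            rw [nnnorm_mul, ENNReal.coe_mul]
            apply mul_le_mul_left
            rw [← ofReal_norm_eq_coe_nnnorm]
            exact ENNReal.ofReal_le_ofReal (hcb j)
        _ = ENNReal.ofReal ‖qq‖ * ∑' j : Fin n → ℤ, (‖L (x - lat n j)‖₊ : ℝ≥0∞) :=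
            ENNReal.tsum_mul_left
        _ ≤ ENNReal.ofReal ‖qq‖ * CA := mul_le_mul_right (hsum_gL x) _
    have hfin' : ∀ x, (∑' j : Fin n → ℤ, (‖c j * L (x - lat n j)‖₊ : ℝ≥0∞)) ≠ ∞ :=
      fun x => ((hfin x).trans_lt (ENNReal.mul_lt_top ENNReal.ofReal_lt_top
        hCAtop.lt_top)).ne
    have hsummable : ∀ x, Summable fun j : Fin n → ℤ => c j * L (x - lat n j) := by
      intro x
      apply Summable.of_nnnorm
      exact ENNReal.tsum_coe_ne_top_iff_summable.mp (hfin' x)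
    have hmeas : Measurable (fun x : EuclideanSpace ℝ (Fin n) =>
        ∑' j : Fin n → ℤ, c j * L (x - lat n j)) := by
      apply measurable_of_tendsto_metrizable' (u := (atTop : Filter (Finset (Fin n → ℤ))))
        (f := fun s x => ∑ j ∈ s, c j * L (x - lat n j))
      · intro s
        exact Finset.measurable_sum _ fun j _ =>
          measurable_const.mul (hLmeas.comp (measurable_id.sub measurable_const))
      · rw [tendsto_pi_nhds]
        intro x
        exact (hsummable x).hasSum
    have hbd : ∀ x, (‖∑' j : Fin n → ℤ, c j * L (x - lat n j)‖₊ : ℝ≥0∞)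
        ≤ ENNReal.ofReal (max 1 CA.toReal * ‖qq‖) := by
      intro x
      calc (‖∑' j : Fin n → ℤ, c j * L (x - lat n j)‖₊ : ℝ≥0∞)
          ≤ ∑' j : Fin n → ℤ, (‖c j * L (x - lat n j)‖₊ : ℝ≥0∞) :=
            Stmt7Aux.nnnorm_tsum_le _ (hfin' x)
        _ ≤ ENNReal.ofReal ‖qq‖ * CA := hfin x
        _ ≤ ENNReal.ofReal ‖qq‖ * ENNReal.ofReal (max 1 CA.toReal) := by
            apply mul_le_mul_right
            conv_lhs => rw [← ENNReal.ofReal_toReal hCAtop]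
            exact ENNReal.ofReal_le_ofReal (le_max_right _ _)
        _ = ENNReal.ofReal (max 1 CA.toReal * ‖qq‖) := by
            rw [← ENNReal.ofReal_mul (norm_nonneg qq), mul_comm ‖qq‖]
    have heLp : eLpNorm (fun x : EuclideanSpace ℝ (Fin n) =>
        ∑' j : Fin n → ℤ, c j * L (x - lat n j)) p volume
        ≤ ENNReal.ofReal (max 1 CA.toReal * ‖qq‖) := by
      have h8 : eLpNorm (fun x : EuclideanSpace ℝ (Fin n) =>
          ∑' j : Fin n → ℤ, c j * L (x - lat n j)) p volume
          = eLpNormEssSup (fun x : EuclideanSpace ℝ (Fin n) =>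
            ∑' j : Fin n → ℤ, c j * L (x - lat n j)) volume := by
        rw [hptop]
        exact eLpNorm_exponent_top
      rw [h8]
      exact essSup_le_of_ae_le _ (ae_of_all _ hbd)
    exact ⟨⟨hmeas.aestronglyMeasurable, heLp.trans_lt ENNReal.ofReal_lt_top⟩, heLp⟩
  · -- 1 ≤ p < ∞
    set pr : ℝ := p.toReal with hprdef
    have hpr1 : 1 ≤ pr := by
      rw [hprdef, ← ENNReal.toReal_one]
      exact ENNReal.toReal_mono hptop hp
    have hpr0 : 0 < pr := lt_of_lt_of_le zero_lt_one hpr1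
    set M : ℝ≥0∞ := CA ^ (pr - 1) * CB with hM
    have hMtop : M ≠ ∞ :=
      ENNReal.mul_ne_top (ENNReal.rpow_ne_top_of_nonneg (by linarith) hCAtop) hCBtop
    set K : ℝ≥0∞ := M ^ (1/pr) with hKdef
    have hKtop : K ≠ ∞ := ENNReal.rpow_ne_top_of_nonneg (by positivity) hMtop
    refine ⟨max 1 K.toReal, lt_of_lt_of_le zero_lt_one (le_max_left _ _), ?_⟩
    intro c hc
    set qq : lp (fun _ : (Fin n → ℤ) => ℂ) p := ⟨c, hc⟩ with hqq
    have hcb : ∀ j, ‖c j‖ ≤ ‖qq‖ := fun j => lp.norm_apply_le_norm hp0 qq j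
    have hfin : ∀ x : EuclideanSpace ℝ (Fin n),
        (∑' j : Fin n → ℤ, (‖c j * L (x - lat n j)‖₊ : ℝ≥0∞))
          ≤ ENNReal.ofReal ‖qq‖ * CA := by
      intro x
      calc ∑' j : Fin n → ℤ, (‖c j * L (x - lat n j)‖₊ : ℝ≥0∞)
          ≤ ∑' j : Fin n → ℤ, ENNReal.ofReal ‖qq‖ * (‖L (x - lat n j)‖₊ : ℝ≥0∞) := by
            apply ENNReal.tsum_le_tsum
            intro j
            rw [nnnorm_mul, ENNReal.coe_mul]
            apply mul_le_mul_left
            rw [← ofReal_norm_eq_coe_nnnorm]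
            exact ENNReal.ofReal_le_ofReal (hcb j)
        _ = ENNReal.ofReal ‖qq‖ * ∑' j : Fin n → ℤ, (‖L (x - lat n j)‖₊ : ℝ≥0∞) :=
            ENNReal.tsum_mul_left
        _ ≤ ENNReal.ofReal ‖qq‖ * CA := mul_le_mul_right (hsum_gL x) _
    have hfin' : ∀ x, (∑' j : Fin n → ℤ, (‖c j * L (x - lat n j)‖₊ : ℝ≥0∞)) ≠ ∞ :=
      fun x => ((hfin x).trans_lt (ENNReal.mul_lt_top ENNReal.ofReal_lt_top
        hCAtop.lt_top)).ne
    have hsummable : ∀ x, Summable fun j : Fin n → ℤ => c j * L (x - lat n j) := by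
      intro x
      apply Summable.of_nnnorm
      exact ENNReal.tsum_coe_ne_top_iff_summable.mp (hfin' x)
    have hmeas : Measurable (fun x : EuclideanSpace ℝ (Fin n) =>
        ∑' j : Fin n → ℤ, c j * L (x - lat n j)) := by
      apply measurable_of_tendsto_metrizable' (u := (atTop : Filter (Finset (Fin n → ℤ))))
        (f := fun s x => ∑ j ∈ s, c j * L (x - lat n j))
      · intro s
        exact Finset.measurable_sum _ fun j _ =>
          measurable_const.mul (hLmeas.comp (measurable_id.sub measurable_const))
      · rw [tendsto_pi_nhds]
        intro x
        exact (hsummable x).hasSum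
    have hptw : ∀ x, (‖∑' j : Fin n → ℤ, c j * L (x - lat n j)‖₊ : ℝ≥0∞)
        ≤ ∑' j : Fin n → ℤ, (‖c j‖₊ : ℝ≥0∞) * (‖L (x - lat n j)‖₊ : ℝ≥0∞) := by
      intro x
      calc (‖∑' j : Fin n → ℤ, c j * L (x - lat n j)‖₊ : ℝ≥0∞)
          ≤ ∑' j : Fin n → ℤ, (‖c j * L (x - lat n j)‖₊ : ℝ≥0∞) :=
            Stmt7Aux.nnnorm_tsum_le _ (hfin' x)
        _ = _ := tsum_congr fun j => by rw [nnnorm_mul, ENNReal.coe_mul]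
    have hpow : ∀ x, (‖∑' j : Fin n → ℤ, c j * L (x - lat n j)‖₊ : ℝ≥0∞) ^ pr
        ≤ CA ^ (pr-1) * ∑' j : Fin n → ℤ,
            ((‖c j‖₊ : ℝ≥0∞))^pr * (‖L (x - lat n j)‖₊ : ℝ≥0∞) := by
      intro x
      calc (‖∑' j : Fin n → ℤ, c j * L (x - lat n j)‖₊ : ℝ≥0∞) ^ pr
          ≤ (∑' j : Fin n → ℤ, (‖c j‖₊ : ℝ≥0∞) * (‖L (x - lat n j)‖₊ : ℝ≥0∞)) ^ pr :=
            ENNReal.rpow_le_rpow (hptw x) hpr0.le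
        _ ≤ _ := Stmt7Aux.holder_tsum _ _ hpr1 (hsum_gL x)
    have htsumc : ∑' j : Fin n → ℤ, ((‖c j‖₊ : ℝ≥0∞))^pr = ENNReal.ofReal (‖qq‖^pr) := by
      have hs : Summable fun j : Fin n → ℤ => ‖c j‖^pr := hc.summable hpr0
      calc ∑' j : Fin n → ℤ, ((‖c j‖₊ : ℝ≥0∞))^pr
          = ∑' j : Fin n → ℤ, ENNReal.ofReal (‖c j‖^pr) := by
            apply tsum_congr
            intro j
            rw [← ofReal_norm_eq_coe_nnnorm, ← ENNReal.ofReal_rpow_of_nonneg (norm_nonneg _)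
              hpr0.le]
        _ = ENNReal.ofReal (∑' j : Fin n → ℤ, ‖c j‖^pr) :=
            (ENNReal.ofReal_tsum_of_nonneg (fun j => Real.rpow_nonneg (norm_nonneg _) _)
              hs).symm
        _ = ENNReal.ofReal (‖qq‖^pr) := by rw [lp.norm_rpow_eq_tsum hpr0 qq]
    have hint : (∫⁻ x, (‖∑' j : Fin n → ℤ, c j * L (x - lat n j)‖₊ : ℝ≥0∞) ^ pr)
        ≤ M * ENNReal.ofReal (‖qq‖^pr) := by
      calc (∫⁻ x, (‖∑' j : Fin n → ℤ, c j * L (x - lat n j)‖₊ : ℝ≥0∞) ^ pr)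
          ≤ ∫⁻ x, CA^(pr-1) * ∑' j : Fin n → ℤ,
              ((‖c j‖₊ : ℝ≥0∞))^pr * (‖L (x - lat n j)‖₊ : ℝ≥0∞) := lintegral_mono hpow
        _ = CA^(pr-1) * ∫⁻ x, ∑' j : Fin n → ℤ,
              ((‖c j‖₊ : ℝ≥0∞))^pr * (‖L (x - lat n j)‖₊ : ℝ≥0∞) :=
            lintegral_const_mul' _ _ (ENNReal.rpow_ne_top_of_nonneg (by linarith) hCAtop)
        _ = CA^(pr-1) * ∑' j : Fin n → ℤ, ∫⁻ x,
              ((‖c j‖₊ : ℝ≥0∞))^pr * (‖L (x - lat n j)‖₊ : ℝ≥0∞) := by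
            rw [lintegral_tsum (fun j => ((hLmeas' j).const_mul _).aemeasurable)]
        _ = CA^(pr-1) * ∑' j : Fin n → ℤ,
              ((‖c j‖₊ : ℝ≥0∞))^pr * ∫⁻ x, (‖L (x - lat n j)‖₊ : ℝ≥0∞) := by
            congr 1
            exact tsum_congr fun j => lintegral_const_mul' _ _
              (ENNReal.rpow_ne_top_of_nonneg hpr0.le ENNReal.coe_ne_top)
        _ ≤ CA^(pr-1) * ∑' j : Fin n → ℤ, ((‖c j‖₊ : ℝ≥0∞))^pr * CB :=
            mul_le_mul_right (ENNReal.tsum_le_tsum fun j =>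
              mul_le_mul_right (hint_gL j) _) _
        _ = M * ∑' j : Fin n → ℤ, ((‖c j‖₊ : ℝ≥0∞))^pr := by
            rw [ENNReal.tsum_mul_right, hM]
            ring
        _ = M * ENNReal.ofReal (‖qq‖^pr) := by rw [htsumc]
    have heLp : eLpNorm (fun x : EuclideanSpace ℝ (Fin n) =>
        ∑' j : Fin n → ℤ, c j * L (x - lat n j)) p volume
        ≤ ENNReal.ofReal (max 1 K.toReal * ‖qq‖) := by
      rw [eLpNorm_eq_lintegral_rpow_enorm_toReal hp0 hptop]
      calc (∫⁻ x, (‖∑' j : Fin n → ℤ, c j * L (x - lat n j)‖₊ : ℝ≥0∞) ^ pr) ^ (1/pr)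
          ≤ (M * ENNReal.ofReal (‖qq‖^pr)) ^ (1/pr) :=
            ENNReal.rpow_le_rpow hint (by positivity)
        _ = K * (ENNReal.ofReal (‖qq‖^pr)) ^ (1/pr) :=
            ENNReal.mul_rpow_of_nonneg _ _ (by positivity)
        _ = K * ENNReal.ofReal ‖qq‖ := by
            congr 1
            rw [ENNReal.ofReal_rpow_of_nonneg (x := ‖qq‖ ^ pr) (p := 1/pr)
              (Real.rpow_nonneg (norm_nonneg qq) pr) (one_div_nonneg.mpr hpr0.le)]
            congr 1
            rw [← Real.rpow_mul (norm_nonneg qq), mul_one_div, div_self hpr0.ne',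
              Real.rpow_one]
        _ ≤ ENNReal.ofReal (max 1 K.toReal) * ENNReal.ofReal ‖qq‖ := by
            apply mul_le_mul_left
            conv_lhs => rw [← ENNReal.ofReal_toReal hKtop]
            exact ENNReal.ofReal_le_ofReal (le_max_right _ _)
        _ = ENNReal.ofReal (max 1 K.toReal * ‖qq‖) :=
            (ENNReal.ofReal_mul (by positivity)).symm
    exact ⟨⟨hmeas.aestronglyMeasurable, heLp.trans_lt ENNReal.ofReal_lt_top⟩, heLp⟩

end
end

section
/- For α ≥ 1, ξ ∈ ℝⁿ with ‖ξ‖ ≤ π (sup-norm coordinates in [-π,π]ⁿ suffices), and j ∈ ℤⁿ∖{0}: e^{α‖ξ‖² - α‖ξ+2πj‖²} ≤ e^{-4π²‖j‖(‖j‖-1)} ≤ e^{-4π²(‖j‖² - ‖j‖)}, and for each fixed j ≠ 0 and ξ ∈ (-π,π)ⁿ, e^{α‖ξ‖² - α‖ξ+2πj‖²} → 0 as α → ∞. Moreover Σ_{j∈ℤⁿ∖{0}} e^{-4π²‖j‖(‖j‖-1)} < ∞. -/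
open Filter Real

noncomputable section

lemma sum1d_aux (c : ℝ) (hc : 0 < c) : Summable fun k : ℤ => Real.exp (-c * (k : ℝ) ^ 2) := by
  have key : Summable fun m : ℕ => Real.exp (-c * (m : ℝ) ^ 2) := by
    have hgeo : Summable fun m : ℕ => Real.exp (-c) ^ m :=
      summable_geometric_of_lt_one (Real.exp_nonneg _)
        (by rw [Real.exp_lt_one_iff]; linarith)
    refine hgeo.of_nonneg_of_le (fun m => (Real.exp_pos _).le) (fun m => ?_)
    rw [← Real.exp_nat_mul]
    apply Real.exp_le_exp.2
    have : (m : ℝ) ≤ (m : ℝ) ^ 2 := by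
      rcases Nat.eq_zero_or_pos m with h | h
      · simp [h]
      · have : (1 : ℝ) ≤ m := by exact_mod_cast h
        nlinarith
    nlinarith
  apply Summable.of_nat_of_neg <;> simpa using key

lemma sumPi_aux (c : ℝ) (hc : 0 < c) : ∀ n : ℕ,
    Summable fun j : Fin n → ℤ => ∏ i, Real.exp (-c * (j i : ℝ) ^ 2) := by
  intro n
  induction n with
  | zero =>
      have : Finite (Fin 0 → ℤ) := by infer_instance
      exact Summable.of_finite
  | succ m ih =>
      have key : Summable fun p : ℤ × (Fin m → ℤ) =>
          Real.exp (-c * (p.1 : ℝ) ^ 2) * ∏ i, Real.exp (-c * (p.2 i : ℝ) ^ 2) := by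
        apply Summable.mul_of_nonneg (sum1d_aux c hc) ih
        · intro k
          exact (Real.exp_pos _).le
        · intro j
          exact Finset.prod_nonneg fun i _ => (Real.exp_pos _).le
      rw [← (Fin.consEquiv fun _ : Fin (m + 1) => ℤ).summable_iff]
      refine key.congr fun p => ?_
      simp [Fin.consEquiv, Fin.prod_univ_succ]

lemma lat_norm_sq (n : ℕ) (j : Fin n → ℤ) : ‖lat n j‖ ^ 2 = ∑ i, ((j i : ℝ)) ^ 2 := by
  rw [EuclideanSpace.norm_eq, Real.sq_sqrt (Finset.sum_nonneg fun i _ => sq_nonneg _)]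
  exact Finset.sum_congr rfl fun i _ => by simp [lat, sq_abs]

lemma lat_one_le (n : ℕ) (j : Fin n → ℤ) (hj : j ≠ 0) : 1 ≤ ‖lat n j‖ := by
  obtain ⟨i, hi⟩ := Function.ne_iff.mp hj
  have h0 : (1 : ℤ) ≤ |j i| := Int.one_le_abs (by simpa using hi)
  have h1 : (1 : ℝ) ≤ ((j i : ℝ)) ^ 2 := by
    have : (1 : ℝ) ≤ |(j i : ℝ)| := by
      rw [← Int.cast_abs]; exact_mod_cast h0
    nlinarith [sq_abs ((j i : ℝ))]
  have h2 : (1 : ℝ) ≤ ‖lat n j‖ ^ 2 := by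
    rw [lat_norm_sq]
    exact h1.trans (Finset.single_le_sum (f := fun i => ((j i : ℝ)) ^ 2)
      (fun i _ => sq_nonneg _) (Finset.mem_univ i))
  nlinarith [norm_nonneg (lat n j)]

lemma lat_inner (n : ℕ) (ξ : EuclideanSpace ℝ (Fin n)) (j : Fin n → ℤ) :
    (inner ℝ ξ (lat n j) : ℝ) = ∑ i, ξ i * (j i : ℝ) := by
  simp [PiLp.inner_apply, lat, RCLike.inner_apply, mul_comm]

lemma lat_expand (n : ℕ) (ξ : EuclideanSpace ℝ (Fin n)) (j : Fin n → ℤ) :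
    ‖ξ + (2 * π) • lat n j‖ ^ 2
      = ‖ξ‖ ^ 2 + 4 * π * (inner ℝ ξ (lat n j) : ℝ) + 4 * π ^ 2 * ‖lat n j‖ ^ 2 := by
  rw [norm_add_sq_real, real_inner_smul_right, norm_smul]
  have h2π : (0:ℝ) < 2 * π := by positivity
  rw [Real.norm_eq_abs, abs_of_pos h2π]
  ring

lemma int_abs_le_sq (k : ℤ) : |(k : ℝ)| ≤ (k : ℝ) ^ 2 := by
  rcases eq_or_ne k 0 with h | h
  · simp [h]
  · have h0 : (1 : ℤ) ≤ |k| := Int.one_le_abs h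
    have h1 : (1 : ℝ) ≤ |(k : ℝ)| := by rw [← Int.cast_abs]; exact_mod_cast h0
    nlinarith [sq_abs ((k : ℝ))]

/-- Regularity conditions (R1), (R2) for the Gaussian family
`φ̂_α(ξ) = e^{-α‖ξ‖²}`: the quotient `M_{j,α}(ξ) = e^{α‖ξ‖² - α‖ξ+2πj‖²}` satisfies the
stated bounds, tends to `0` as `α → ∞`, and the dominating sequence is summable. -/
theorem stmt12 (n : ℕ) (hn : 1 ≤ n) :
    (∀ α : ℝ, 1 ≤ α → ∀ ξ : EuclideanSpace ℝ (Fin n), ‖ξ‖ ≤ π →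
      ∀ j : Fin n → ℤ, j ≠ 0 →
        Real.exp (α * ‖ξ‖ ^ 2 - α * ‖ξ + (2 * π) • lat n j‖ ^ 2) ≤
          Real.exp (-(4 * π ^ 2) * ‖lat n j‖ * (‖lat n j‖ - 1))) ∧
    (∀ j : Fin n → ℤ, j ≠ 0 →
      Real.exp (-(4 * π ^ 2) * ‖lat n j‖ * (‖lat n j‖ - 1)) ≤
        Real.exp (-(4 * π ^ 2) * (‖lat n j‖ ^ 2 - ‖lat n j‖))) ∧
    (∀ j : Fin n → ℤ, j ≠ 0 → ∀ ξ : EuclideanSpace ℝ (Fin n), (∀ i, |ξ i| < π) →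
      Tendsto (fun α : ℝ =>
          Real.exp (α * ‖ξ‖ ^ 2 - α * ‖ξ + (2 * π) • lat n j‖ ^ 2)) atTop (nhds 0)) ∧
    Summable (fun j : {j : Fin n → ℤ // j ≠ 0} =>
      Real.exp (-(4 * π ^ 2) * ‖lat n (j : Fin n → ℤ)‖ * (‖lat n (j : Fin n → ℤ)‖ - 1))) := by
  refine ⟨?_, ?_, ?_, ?_⟩
  · -- part 1
    intro α hα ξ hξ j hj
    rw [Real.exp_le_exp, lat_expand]
    set x := ‖lat n j‖ with hxdef
    set t := (inner ℝ ξ (lat n j) : ℝ) with htdef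
    have hx : 1 ≤ x := lat_one_le n j hj
    have hπ : (0:ℝ) < π := pi_pos
    have habs : |t| ≤ ‖ξ‖ * x := abs_real_inner_le_norm ξ (lat n j)
    have hξ0 : 0 ≤ ‖ξ‖ := norm_nonneg _
    have ht : -(π * x) ≤ t := by
      have : |t| ≤ π * x := habs.trans (by nlinarith)
      linarith [neg_abs_le t]
    have hQ : 4 * π ^ 2 * x * (x - 1) ≤ 4 * π * t + 4 * π ^ 2 * x ^ 2 := by
      nlinarith [mul_nonneg hπ.le (by linarith : 0 ≤ t + π * x)]
    have hQ0 : 0 ≤ 4 * π ^ 2 * x * (x - 1) := by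
      have := mul_nonneg (mul_nonneg (by positivity : (0:ℝ) ≤ 4 * π ^ 2) (by linarith : (0:ℝ) ≤ x)) (by linarith : (0:ℝ) ≤ x - 1)
      nlinarith
    have hpos : 0 ≤ 4 * π * t + 4 * π ^ 2 * x ^ 2 := le_trans hQ0 hQ
    have hmul := mul_le_mul_of_nonneg_right hα hpos
    nlinarith
  · -- part 2
    intro j hj
    apply le_of_eq
    congr 1
    ring
  · -- part 3
    intro j hj ξ hξ
    set x := ‖lat n j‖ with hxdef
    set t := (inner ℝ ξ (lat n j) : ℝ) with htdef
    have hπ : (0:ℝ) < π := pi_pos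
    obtain ⟨i₀, hi₀⟩ := Function.ne_iff.mp hj
    have hj₀ : (1 : ℝ) ≤ |(j i₀ : ℝ)| := by
      rw [← Int.cast_abs]
      exact_mod_cast Int.one_le_abs (by simpa using hi₀)
    have hst : ∑ i, |ξ i| * |(j i : ℝ)| < ∑ i, π * |(j i : ℝ)| := by
      refine Finset.sum_lt_sum (fun i _ => ?_) ⟨i₀, Finset.mem_univ _, ?_⟩
      · exact mul_le_mul_of_nonneg_right (hξ i).le (abs_nonneg _)
      · exact mul_lt_mul_of_pos_right (hξ i₀) (by linarith)
    have hsum2 : ∑ i, π * |(j i : ℝ)| ≤ π * x ^ 2 := by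
      rw [hxdef, lat_norm_sq, Finset.mul_sum]
      exact Finset.sum_le_sum fun i _ =>
        mul_le_mul_of_nonneg_left (int_abs_le_sq (j i)) hπ.le
    have habs : |t| ≤ ∑ i, |ξ i| * |(j i : ℝ)| := by
      rw [htdef, lat_inner]
      exact (Finset.abs_sum_le_sum_abs _ _).trans_eq (by simp [abs_mul])
    have ht : -(π * x ^ 2) < t := by
      have h1 : |t| < π * x ^ 2 := lt_of_le_of_lt habs (lt_of_lt_of_le hst hsum2)
      linarith [neg_abs_le t]
    have hc : 0 < 4 * π * t + 4 * π ^ 2 * x ^ 2 := by nlinarith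
    have heq : (fun α : ℝ => Real.exp (α * ‖ξ‖ ^ 2 - α * ‖ξ + (2 * π) • lat n j‖ ^ 2))
        = fun α : ℝ => Real.exp (α * (-(4 * π * t + 4 * π ^ 2 * x ^ 2))) := by
      funext α
      congr 1
      rw [lat_expand]
      ring
    rw [heq]
    apply Real.tendsto_exp_atBot.comp
    exact Tendsto.atTop_mul_const_of_neg (by linarith) tendsto_id
  · -- part 4
    have hc : (0:ℝ) < 2 * π ^ 2 := by positivity
    have hbig : Summable fun j : Fin n → ℤ =>
        Real.exp (2 * π ^ 2) * ∏ i, Real.exp (-(2 * π ^ 2) * (j i : ℝ) ^ 2) :=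
      ((sumPi_aux (2 * π ^ 2) hc n).mul_left _)
    have hsub : Summable fun j : {j : Fin n → ℤ // j ≠ 0} =>
        Real.exp (2 * π ^ 2) * ∏ i, Real.exp (-(2 * π ^ 2) * ((j : Fin n → ℤ) i : ℝ) ^ 2) :=
      hbig.comp_injective Subtype.val_injective
    refine hsub.of_nonneg_of_le (fun j => (Real.exp_pos _).le) fun j => ?_
    set x := ‖lat n (j : Fin n → ℤ)‖ with hxdef
    have hx2 : x ^ 2 = ∑ i, (((j : Fin n → ℤ) i : ℝ)) ^ 2 := lat_norm_sq n _
    have hbound : -(4 * π ^ 2) * x * (x - 1) ≤ 2 * π ^ 2 + ∑ i, -(2 * π ^ 2) * (((j : Fin n → ℤ) i : ℝ)) ^ 2 := by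
      have hsum : ∑ i, -(2 * π ^ 2) * (((j : Fin n → ℤ) i : ℝ)) ^ 2 = -(2 * π ^ 2) * x ^ 2 := by
        rw [hx2, ← Finset.mul_sum]
      rw [hsum]
      nlinarith [sq_nonneg (x - 1), pi_pos]
    calc Real.exp (-(4 * π ^ 2) * x * (x - 1))
        ≤ Real.exp (2 * π ^ 2 + ∑ i, -(2 * π ^ 2) * (((j : Fin n → ℤ) i : ℝ)) ^ 2) :=
          Real.exp_le_exp.2 hbound
      _ = Real.exp (2 * π ^ 2) * ∏ i, Real.exp (-(2 * π ^ 2) * (((j : Fin n → ℤ) i : ℝ)) ^ 2) := by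
          rw [Real.exp_add, Real.exp_sum]

end
end

section
/- Let φ̂_α : ℝⁿ → [0,∞) be measurable with φ̂_α(ξ) ≥ δ_α > 0 on [-π,π]ⁿ, for α in a directed set A. Set M_{j,α}(ξ) = φ̂_α(ξ+2πj)/φ̂_α(ξ) for ξ ∈ [-π,π]ⁿ, j ∈ ℤⁿ∖{0}, and assume: (R1) M_{j,α}(ξ) → 0 as α → ∞ for a.e. ξ ∈ [-π,π]ⁿ and each j ≠ 0; (R2) M_{j,α}(ξ) ≤ M_j with (M_j) ∈ ℓ¹(ℤⁿ∖{0}) independent of α. Define L̂_α(ξ) = (2π)^{-n/2} φ̂_α(ξ)/Σ_{j∈ℤⁿ} φ̂_α(ξ-2πj). Then (2π)^{n/2} L̂_α(ξ) → χ_{[-π,π]ⁿ}(ξ) as α → ∞, for almost every ξ ∈ ℝⁿ. -/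
open MeasureTheory Filter Real

noncomputable section

lemma lat_zero (n : ℕ) : lat n 0 = 0 := by
  ext i; simp [lat]

lemma key_shift (n : ℕ) (r : EuclideanSpace ℝ (Fin n)) (j₀ j : Fin n → ℤ) :
    r + (2*π) • lat n j₀ - (2*π) • lat n j = r + (2*π) • lat n (j₀ - j) := by
  ext i
  simp only [lat, PiLp.add_apply, PiLp.sub_apply, PiLp.smul_apply, smul_eq_mul, Pi.sub_apply, WithLp.ofLp_toLp]
  push_cast; ring

lemma cube_meas (n : ℕ) : MeasurableSet (cube n) := by
  have : cube n = ⋂ i, {ξ : EuclideanSpace ℝ (Fin n) | |ξ i| ≤ π} := by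
    ext ξ; simp [cube]
  rw [this]
  exact MeasurableSet.iInter fun i =>
    measurableSet_le
      (((EuclideanSpace.proj i : EuclideanSpace ℝ (Fin n) →L[ℝ] ℝ).continuous.measurable).abs)
      measurable_const

lemma hyperplane_null (n : ℕ) (i : Fin n) (c : ℝ) :
    volume {ξ : EuclideanSpace ℝ (Fin n) | ξ i = c} = 0 := by
  have h := (EuclideanSpace.volume_preserving_symm_measurableEquiv_toLp (Fin n)).measure_preimage
    (s := {f : Fin n → ℝ | f i = c}) ?_
  · have : (MeasurableEquiv.toLp 2 (Fin n → ℝ)).symm ⁻¹' {f : Fin n → ℝ | f i = c}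
        = {ξ : EuclideanSpace ℝ (Fin n) | ξ i = c} := rfl
    rw [this] at h
    rw [h]
    rw [MeasureTheory.volume_pi]
    exact MeasureTheory.Measure.pi_eval_preimage_null
      (fun _ : Fin n => (volume : Measure ℝ)) (measure_singleton c)
  · exact (measurableSet_singleton c).preimage (measurable_pi_apply i) |>.nullMeasurableSet

/-- For a regular family of cardinal interpolators, `(2π)^{n/2} L̂_α(ξ) =
φ̂_α(ξ)/Σ_j φ̂_α(ξ-2πj)` converges a.e. to the indicator of the cube `[-π,π]ⁿ`. -/
theorem stmt13 (n : ℕ) (ι : Type*) [SemilatticeSup ι] [Nonempty ι]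
    (φ : ι → EuclideanSpace ℝ (Fin n) → ℝ)
    (hmeas : ∀ α, Measurable (φ α))
    (hnonneg : ∀ α ξ, 0 ≤ φ α ξ)
    (hδ : ∀ α, ∃ δ : ℝ, 0 < δ ∧ ∀ ξ ∈ cube n, δ ≤ φ α ξ)
    (hR1 : ∀ j : Fin n → ℤ, j ≠ 0 →
      ∀ᵐ ξ ∂(volume.restrict (cube n)),
        Tendsto (fun α => φ α (ξ + (2 * π) • lat n j) / φ α ξ) atTop (nhds 0))
    (hR2 : ∃ M : (Fin n → ℤ) → ℝ,
      Summable (fun j : {j : Fin n → ℤ // j ≠ 0} => M (j : Fin n → ℤ)) ∧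
      ∀ α, ∀ j : Fin n → ℤ, j ≠ 0 → ∀ ξ ∈ cube n,
        φ α (ξ + (2 * π) • lat n j) / φ α ξ ≤ M j) :
    ∀ᵐ ξ : EuclideanSpace ℝ (Fin n) ∂volume,
      Tendsto (fun α => φ α ξ / ∑' j : Fin n → ℤ, φ α (ξ - (2 * π) • lat n j))
        atTop (nhds (Set.indicator (cube n) (fun _ => (1 : ℝ)) ξ)) := by
  obtain ⟨M, hMsum, hM⟩ := hR2
  have hMsum' : Summable (fun j : ↥(({0} : Set (Fin n → ℤ))ᶜ) => M ↑j) :=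
    (Equiv.summable_iff
      (⟨fun j => ⟨j.1, fun h => j.2 (Set.mem_singleton_iff.mp h)⟩,
        fun k => ⟨k.1, fun h => k.2 (Set.mem_singleton_iff.mpr h)⟩,
        fun _ => rfl, fun _ => rfl⟩ :
        {j : Fin n → ℤ // j ≠ 0} ≃ ↥(({0} : Set (Fin n → ℤ))ᶜ))).mp hMsum
  -- pointwise positivity on the cube
  have hφpos : ∀ α, ∀ r ∈ cube n, 0 < φ α r := by
    intro α r hr
    obtain ⟨δ, hp, hl⟩ := hδ α
    exact lt_of_lt_of_le hp (hl r hr)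
  -- summability of the lattice sums
  have hsum : ∀ α, ∀ r ∈ cube n,
      Summable (fun k : Fin n → ℤ => φ α (r + (2 * π) • lat n k)) := by
    intro α r hr
    rw [← (Set.finite_singleton (0 : Fin n → ℤ)).summable_compl_iff]
    apply Summable.of_nonneg_of_le (fun k => hnonneg α _) ?_ (hMsum'.mul_right (φ α r))
    intro k
    have hk : (k : Fin n → ℤ) ≠ 0 := fun h => k.2 (Set.mem_singleton_iff.mpr h)
    have h1 := hM α k hk r hr
    have hφr := hφpos α r hr
    calc φ α (r + (2 * π) • lat n ↑k)
        = (φ α (r + (2 * π) • lat n ↑k) / φ α r) * φ α r := by field_simp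
      _ ≤ M ↑k * φ α r := mul_le_mul_of_nonneg_right h1 hφr.le
  -- the denominator does not depend on the translate
  have hden : ∀ α (r : EuclideanSpace ℝ (Fin n)) (j₀ : Fin n → ℤ),
      (∑' j : Fin n → ℤ, φ α (r + (2 * π) • lat n j₀ - (2 * π) • lat n j))
        = ∑' k : Fin n → ℤ, φ α (r + (2 * π) • lat n k) := by
    intro α r j₀
    have h1 : ∀ j, r + (2 * π) • lat n j₀ - (2 * π) • lat n j
        = r + (2 * π) • lat n (j₀ - j) := key_shift n r j₀
    simp only [h1]
    exact (Equiv.subLeft j₀).tsum_eq (fun k => φ α (r + (2 * π) • lat n k))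
  -- lower bound for the denominator
  have hlb : ∀ α, ∀ r ∈ cube n,
      φ α r ≤ ∑' k : Fin n → ℤ, φ α (r + (2 * π) • lat n k) := by
    intro α r hr
    have h0 : φ α (r + (2 * π) • lat n 0) = φ α r := by
      rw [lat_zero, smul_zero, add_zero]
    calc φ α r = φ α (r + (2 * π) • lat n 0) := h0.symm
      _ ≤ _ := Summable.le_tsum (hsum α r hr) 0 (fun k _ => hnonneg α _)
  -- good set
  set S : Set (EuclideanSpace ℝ (Fin n)) :=
    {r | (∀ i, |r i| < π) ∧ ∀ j : Fin n → ℤ, j ≠ 0 →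
      Tendsto (fun α => φ α (r + (2 * π) • lat n j) / φ α r) atTop (nhds 0)} with hSdef
  have hbad : volume ((cube n) \ S) = 0 := by
    have hae : ∀ᵐ r ∂(volume.restrict (cube n)), ∀ j : Fin n → ℤ, j ≠ 0 →
        Tendsto (fun α => φ α (r + (2 * π) • lat n j) / φ α r) atTop (nhds 0) := by
      rw [ae_all_iff]
      intro j
      rcases eq_or_ne j 0 with rfl | hj
      · exact Eventually.of_forall fun r h => absurd rfl h
      · exact (hR1 j hj).mono fun r h _ => h
    have h1 : volume ({r : EuclideanSpace ℝ (Fin n) | ¬ ∀ j : Fin n → ℤ, j ≠ 0 →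
        Tendsto (fun α => φ α (r + (2 * π) • lat n j) / φ α r) atTop (nhds 0)} ∩ cube n) = 0 := by
      have := ae_iff.mp hae
      rwa [Measure.restrict_apply' (cube_meas n)] at this
    apply measure_mono_null (t := ({r : EuclideanSpace ℝ (Fin n) | ¬ ∀ j : Fin n → ℤ, j ≠ 0 →
        Tendsto (fun α => φ α (r + (2 * π) • lat n j) / φ α r) atTop (nhds 0)} ∩ cube n)
        ∪ ⋃ i : Fin n, ({r : EuclideanSpace ℝ (Fin n) | r i = π} ∪ {r | r i = -π}))
    · rintro r ⟨hrc, hrS⟩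
      rw [hSdef, Set.mem_setOf_eq, not_and_or] at hrS
      rcases hrS with h | h
      · right
        push_neg at h
        obtain ⟨i, hi⟩ := h
        have : |r i| = π := le_antisymm (hrc i) hi
        rcases abs_eq (le_of_lt pi_pos) |>.mp this with h' | h'
        · exact Set.mem_iUnion.mpr ⟨i, Or.inl h'⟩
        · exact Set.mem_iUnion.mpr ⟨i, Or.inr h'⟩
      · exact Or.inl ⟨h, hrc⟩
    · refine measure_union_null h1 (measure_iUnion_null fun i => measure_union_null ?_ ?_)
      · exact hyperplane_null n i π
      · exact hyperplane_null n i (-π)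
  -- the key pointwise convergence
  have key : ∀ r ∈ S, r ∈ cube n → ∀ j₀ : Fin n → ℤ,
      Tendsto (fun α => φ α (r + (2 * π) • lat n j₀) /
          ∑' j : Fin n → ℤ, φ α (r + (2 * π) • lat n j₀ - (2 * π) • lat n j)) atTop
        (nhds (Set.indicator (cube n) (fun _ => (1 : ℝ)) (r + (2 * π) • lat n j₀))) := by
    intro r hrS hrc j₀
    obtain ⟨hint, htend⟩ := hrS
    simp only [hden]
    rcases eq_or_ne j₀ 0 with rfl | hj₀
    · -- limit is 1
      have hr0 : r + (2 * π) • lat n 0 = r := by rw [lat_zero, smul_zero, add_zero]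
      simp only [hr0, Set.indicator_of_mem hrc]
      have hsplit : ∀ α, (∑' k : Fin n → ℤ, φ α (r + (2 * π) • lat n k))
          = φ α r + ∑' k : ↥(({0} : Set (Fin n → ℤ))ᶜ), φ α (r + (2 * π) • lat n ↑k) := by
        intro α
        rw [← Summable.tsum_subtype_add_tsum_subtype_compl (hsum α r hrc) {0},
          tsum_singleton (0 : Fin n → ℤ) (fun k => φ α (r + (2 * π) • lat n k))]
        congr 1
        rw [lat_zero, smul_zero, add_zero]
      have hT : Tendsto (fun α =>
          (∑' k : ↥(({0} : Set (Fin n → ℤ))ᶜ), φ α (r + (2 * π) • lat n ↑k)) / φ α r)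
          atTop (nhds 0) := by
        have h2 := tendsto_tsum_of_dominated_convergence (𝓕 := atTop)
          (f := fun α (k : ↥(({0} : Set (Fin n → ℤ))ᶜ)) => φ α (r + (2 * π) • lat n ↑k) / φ α r)
          (g := fun _ => (0 : ℝ)) (bound := fun k => M ↑k) hMsum'
          (fun k => htend ↑k (fun h => k.2 (Set.mem_singleton_iff.mpr h)))
          (Eventually.of_forall fun α k => by
            rw [Real.norm_eq_abs, abs_of_nonneg (div_nonneg (hnonneg α _) (hnonneg α _))]
            exact hM α ↑k (fun h => k.2 (Set.mem_singleton_iff.mpr h)) r hrc)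
        simp only [tsum_zero] at h2
        refine h2.congr fun α => ?_
        exact tsum_div_const
      have hfin : Tendsto (fun α =>
          1 / (1 + (∑' k : ↥(({0} : Set (Fin n → ℤ))ᶜ), φ α (r + (2 * π) • lat n ↑k)) / φ α r))
          atTop (nhds 1) := by
        have h3 : Tendsto (fun α => (1 : ℝ) /
            (1 + (∑' k : ↥(({0} : Set (Fin n → ℤ))ᶜ), φ α (r + (2 * π) • lat n ↑k)) / φ α r))
            atTop (nhds ((1 : ℝ) / (1 + 0))) :=
          Tendsto.div tendsto_const_nhds (tendsto_const_nhds.add hT) (by norm_num)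
        simpa using h3
      refine hfin.congr fun α => ?_
      rw [hsplit α, one_add_div (hφpos α r hrc).ne', one_div_div]
    · -- limit is 0
      have hout : r + (2 * π) • lat n j₀ ∉ cube n := by
        obtain ⟨i, hi⟩ := Function.ne_iff.mp hj₀
        intro hmem
        have h1 := hmem i
        have h2 : (r + (2 * π) • lat n j₀) i = r i + 2 * π * (j₀ i : ℝ) := by
          simp [lat, PiLp.add_apply, PiLp.smul_apply, smul_eq_mul]
        rw [h2] at h1
        have h3 : (1 : ℝ) ≤ |(j₀ i : ℝ)| := by
          exact_mod_cast Int.one_le_abs hi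
        have h5 : 2 * π ≤ |2 * π * (j₀ i : ℝ)| := by
          rw [abs_mul, abs_of_pos (by positivity : (0:ℝ) < 2 * π)]
          nlinarith [pi_pos]
        have h6 : |2 * π * (j₀ i : ℝ)| ≤ |r i| + |r i + 2 * π * (j₀ i : ℝ)| := by
          have h7 := abs_add_le (-(r i)) (r i + 2 * π * (j₀ i : ℝ))
          have h8 : -(r i) + (r i + 2 * π * (j₀ i : ℝ)) = 2 * π * (j₀ i : ℝ) := by ring
          rw [h8, abs_neg] at h7
          exact h7
        have h9 := hint i
        linarith
      simp only [Set.indicator_of_notMem hout]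
      apply squeeze_zero
        (fun α => div_nonneg (hnonneg α _) (tsum_nonneg fun k => hnonneg α _))
        (g := fun α => φ α (r + (2 * π) • lat n j₀) / φ α r) ?_ (htend j₀ hj₀)
      intro α
      exact div_le_div_of_nonneg_left (hnonneg α _) (hφpos α r hrc) (hlb α r hrc)
  -- globalize
  have hglobal : ∀ ξ : EuclideanSpace ℝ (Fin n),
      (∀ j₀ : Fin n → ℤ, ξ - (2 * π) • lat n j₀ ∉ (cube n) \ S) →
      Tendsto (fun α => φ α ξ / ∑' j : Fin n → ℤ, φ α (ξ - (2 * π) • lat n j))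
        atTop (nhds (Set.indicator (cube n) (fun _ => (1 : ℝ)) ξ)) := by
    intro ξ hξ
    set j₀ : Fin n → ℤ := fun i => round (ξ i / (2 * π)) with hj₀def
    set r : EuclideanSpace ℝ (Fin n) := ξ - (2 * π) • lat n j₀ with hrdef
    have hrc : r ∈ cube n := by
      intro i
      have hri : r i = ξ i - 2 * π * (j₀ i : ℝ) := by
        simp [hrdef, lat, PiLp.sub_apply, PiLp.smul_apply, smul_eq_mul]
      rw [hri]
      have h2π : (0 : ℝ) < 2 * π := by positivity
      have heq : ξ i - 2 * π * (j₀ i : ℝ)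
          = (2 * π) * (ξ i / (2 * π) - (round (ξ i / (2 * π)) : ℝ)) := by
        rw [hj₀def]; field_simp
      rw [heq, abs_mul, abs_of_pos h2π]
      calc 2 * π * |ξ i / (2 * π) - (round (ξ i / (2 * π)) : ℝ)|
          ≤ 2 * π * (1 / 2) := by
            exact mul_le_mul_of_nonneg_left (abs_sub_round _) h2π.le
        _ = π := by ring
    have hrS : r ∈ S := by
      by_contra h
      exact hξ j₀ ⟨hrc, h⟩
    have hξeq : ξ = r + (2 * π) • lat n j₀ := by rw [hrdef]; abel
    rw [hξeq]
    exact key r hrS hrc j₀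
  rw [ae_iff]
  apply measure_mono_null
    (t := ⋃ j₀ : Fin n → ℤ,
      (fun ξ : EuclideanSpace ℝ (Fin n) => ξ - (2 * π) • lat n j₀) ⁻¹' ((cube n) \ S))
  · intro ξ hξ
    simp only [Set.mem_setOf_eq] at hξ
    by_contra h
    simp only [Set.mem_iUnion, Set.mem_preimage, not_exists] at h
    exact hξ (hglobal ξ h)
  · apply measure_iUnion_null
    intro j₀
    have heq : (fun ξ : EuclideanSpace ℝ (Fin n) => ξ - (2 * π) • lat n j₀)
        = (fun ξ => ξ + (-((2 * π) • lat n j₀))) := by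
      funext ξ; rw [sub_eq_add_neg]
    rw [heq, measure_preimage_add_right]
    exact hbad

end
end
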